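/- arXiv:math/0503533 — 5 statements merged into one kernel-verified Lean document; each statement's English description precedes it below -/
import Mathlib

section
/- Let g be a finite-dimensional real Lie algebra and φ: g → g a Lie algebra automorphism; set A = φ − id and assume ker(A²) = ker(A). Then h := ker A is a Lie subalgebra of g, the subspace m := A(g) is invariant under φ, g = h ⊕ m as a direct sum of vector spaces, and [h, m] ⊆ m. (Every regular Φ-space is reductive, with canonical reductive decomposition g = h ⊕ m, m = A(g).) -/
/-- Every regular Φ-space is reductive: if φ is an automorphism of a
finite-dimensional real Lie algebra g, A = φ − id, and ker(A²) = ker(A),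
then h = ker A is a Lie subalgebra, m = A(g) is φ-invariant,
g = h ⊕ m as vector spaces, and [h, m] ⊆ m. -/
theorem stmt_1 (g : Type*) [LieRing g] [LieAlgebra ℝ g] [FiniteDimensional ℝ g]
    (φ : g ≃ₗ⁅ℝ⁆ g)
    (A : Module.End ℝ g) (hA : A = (φ.toLieHom : g →ₗ[ℝ] g) - LinearMap.id)
    (hreg : LinearMap.ker (A ^ 2) = LinearMap.ker A) :
    (∀ X ∈ LinearMap.ker A, ∀ Y ∈ LinearMap.ker A, ⁅X, Y⁆ ∈ LinearMap.ker A) ∧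
    (∀ X ∈ LinearMap.range A, φ X ∈ LinearMap.range A) ∧
    IsCompl (LinearMap.ker A) (LinearMap.range A) ∧
    (∀ X ∈ LinearMap.ker A, ∀ Y ∈ LinearMap.range A, ⁅X, Y⁆ ∈ LinearMap.range A) := by
  have hAx : ∀ x, A x = φ x - x := by intro x; simp [hA]
  have hker : ∀ x, x ∈ LinearMap.ker A ↔ φ x = x := by
    intro x
    simp only [LinearMap.mem_ker, hAx, sub_eq_zero]
  -- h is a subalgebra
  have h1 : ∀ X ∈ LinearMap.ker A, ∀ Y ∈ LinearMap.ker A, ⁅X, Y⁆ ∈ LinearMap.ker A := by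
    intro X hX Y hY
    rw [hker] at hX hY ⊢
    rw [LieEquiv.map_lie, hX, hY]
  -- φ-invariance of range
  have h2 : ∀ X ∈ LinearMap.range A, φ X ∈ LinearMap.range A := by
    rintro _ ⟨y, rfl⟩
    refine ⟨φ y, ?_⟩
    rw [hAx, hAx]; exact (φ.toLieHom.map_sub _ _).symm
  -- disjointness
  have hdisj : Disjoint (LinearMap.ker A) (LinearMap.range A) := by
    rw [Submodule.disjoint_def]
    rintro x hx ⟨y, rfl⟩
    have : y ∈ LinearMap.ker (A ^ 2) := by
      simp only [LinearMap.mem_ker, pow_two, Module.End.mul_apply]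
      exact hx
    rw [hreg, LinearMap.mem_ker] at this
    exact this
  have h3 : IsCompl (LinearMap.ker A) (LinearMap.range A) := by
    refine ⟨hdisj, ?_⟩
    rw [codisjoint_iff]
    apply Submodule.eq_top_of_disjoint
    · rw [add_comm]
      exact (LinearMap.finrank_range_add_finrank_ker A).ge
    · exact hdisj
  refine ⟨h1, h2, h3, ?_⟩
  rintro X hX _ ⟨Z, rfl⟩
  rw [hker] at hX
  refine ⟨⁅X, Z⁆, ?_⟩
  rw [hAx, hAx, lie_sub]
  have : φ ⁅X, Z⁆ = ⁅X, φ Z⁆ := by rw [LieEquiv.map_lie, hX]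
  rw [this]
end

section
/- Let g be a finite-dimensional real Lie algebra, φ: g → g a Lie algebra automorphism, A = φ − id, h = ker A (the fixed-point subalgebra of φ), and g₀ = ⋃_{n≥1} ker(Aⁿ) the Fitting null component of A. Then the following conditions are equivalent: (1) h = g₀; (2) g = h ⊕ A(g) as vector spaces; (3) the restriction of A to A(g) is injective; (4) for every X ∈ g, A²X = 0 implies AX = 0; (5) h = ker(φ_s − id), where φ_s is the semisimple part of φ, i.e., the unique semisimple endomorphism commuting with φ such that φ − φ_s is nilpotent. (These are the equivalent defining conditions for a homogeneous Φ-space to be a regular Φ-space.) -/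
/-- An endomorphism is semisimple if every invariant subspace has an
invariant complement. -/
def IsSemisimpleEnd {g : Type*} [AddCommGroup g] [Module ℝ g]
    (S : Module.End ℝ g) : Prop :=
  ∀ p : Submodule ℝ g, (∀ x ∈ p, S x ∈ p) →
    ∃ q : Submodule ℝ g, (∀ x ∈ q, S x ∈ q) ∧ IsCompl p q

/-- For a semisimple `S`, the generalized kernel of `S - 1` is its kernel. -/
lemma aux_peel {g : Type*} [AddCommGroup g] [Module ℝ g] (S : Module.End ℝ g)
    (hS : IsSemisimpleEnd S) (K : ℕ) (x : g) (hx : ((S - 1) ^ K) x = 0) :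
    (S - 1) x = 0 := by
  set B : Module.End ℝ g := S - 1 with hB
  have hBapp : ∀ y : g, B y = S y - y := fun y => rfl
  obtain ⟨q, hqinv, hcompl⟩ := hS (LinearMap.ker B) (by
    intro y hy
    rw [LinearMap.mem_ker] at hy ⊢
    have hSy : S y = y := by
      have := hBapp y
      rw [hy] at this
      exact (sub_eq_zero.mp this.symm)
    rw [hSy]; exact hy)
  have hqB : ∀ y ∈ q, B y ∈ q := fun y hy => by
    rw [hBapp]; exact Submodule.sub_mem q (hqinv y hy) hy
  have inj : ∀ (j : ℕ) (v : g), v ∈ q → (B ^ j) v = 0 → v = 0 := by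
    intro j
    induction j with
    | zero => intro v _ hv; simpa using hv
    | succ j ih =>
      intro v hv hvz
      have h1 : (B ^ j) (B v) = 0 := by
        rw [← Module.End.mul_apply, ← pow_succ]; exact hvz
      have h2 : B v = 0 := ih (B v) (hqB v hv) h1
      exact (Submodule.disjoint_def.mp hcompl.disjoint) v
        (LinearMap.mem_ker.mpr h2) hv
  rcases K with _ | K
  · simp only [pow_zero, Module.End.one_apply] at hx
    rw [hx, map_zero]
  · have hxtop : x ∈ (⊤ : Submodule ℝ g) := Submodule.mem_top
    rw [← hcompl.sup_eq_top] at hxtop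
    obtain ⟨u, hu, v, hv, huv⟩ := Submodule.mem_sup.mp hxtop
    have hBu : B u = 0 := LinearMap.mem_ker.mp hu
    have hBKu : (B ^ (K + 1)) u = 0 := by
      rw [pow_succ, Module.End.mul_apply, hBu, map_zero]
    have hBKv : (B ^ (K + 1)) v = 0 := by
      have : (B ^ (K + 1)) u + (B ^ (K + 1)) v = 0 := by
        rw [← map_add, huv]; exact hx
      rwa [hBKu, zero_add] at this
    have hv0 : v = 0 := inj (K + 1) v hv hBKv
    have : x = u := by rw [← huv, hv0, add_zero]
    rw [this, hBu]

/-- Key lemma: if `S` is semisimple, commutes with `P`, and `P - S` is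
nilpotent, then `ker (S - 1)` is the Fitting null component of `A = P - 1`. -/
lemma aux_key {g : Type*} [AddCommGroup g] [Module ℝ g]
    (P S A : Module.End ℝ g) (hA : A = P - 1)
    (hS : IsSemisimpleEnd S) (hc : Commute P S) (hn : IsNilpotent (P - S)) :
    LinearMap.ker (S - 1) = ⨆ n : ℕ, LinearMap.ker (A ^ (n + 1)) := by
  set B : Module.End ℝ g := S - 1 with hB
  set N : Module.End ℝ g := P - S with hN
  have hadd : A = B + N := by rw [hA, hB, hN]; abel
  have hSP : Commute S P := hc.symm
  have hBN : Commute B N :=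
    Commute.sub_left (hSP.sub_right (Commute.refl S))
      ((Commute.one_left P).sub_right (Commute.one_left S))
  have hAN : Commute A N := by
    rw [hadd]; exact Commute.add_left hBN (Commute.refl N)
  obtain ⟨t, ht⟩ := hn
  have htN : N ^ t = 0 := ht
  apply le_antisymm
  · -- ker B ≤ ⨆ ker A^(n+1)
    intro x hx
    rw [LinearMap.mem_ker] at hx
    have main : ∀ k : ℕ, B ((A ^ k) x) = 0 ∧ (A ^ k) x = (N ^ k) x := by
      intro k
      induction k with
      | zero => simp [hx]
      | succ k ih =>
        obtain ⟨ih1, ih2⟩ := ih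
        have hApow : (A ^ (k + 1)) x = A ((A ^ k) x) := by
          rw [pow_succ', Module.End.mul_apply]
        have hAy : ∀ y : g, A y = B y + N y := fun y => by
          rw [hadd]; rfl
        have hstep : A ((A ^ k) x) = N ((A ^ k) x) := by
          rw [hAy ((A ^ k) x), ih1, zero_add]
        constructor
        · rw [hApow, hstep]
          have hcomm := LinearMap.congr_fun hBN.eq ((A ^ k) x)
          simp only [Module.End.mul_apply] at hcomm
          rw [hcomm, ih1, map_zero]
        · rw [hApow, hstep, ih2, ← Module.End.mul_apply, ← pow_succ']
    have hAt : (A ^ t) x = 0 := by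
      rw [(main t).2, htN]; rfl
    refine le_iSup (fun n => LinearMap.ker (A ^ (n + 1))) t ?_
    rw [LinearMap.mem_ker, pow_succ', Module.End.mul_apply, hAt, map_zero]
  · -- ⨆ ker A^(n+1) ≤ ker B
    refine iSup_le fun n => ?_
    intro x hx
    rw [LinearMap.mem_ker] at hx ⊢
    set m : ℕ := n + 1 with hm
    set C : Module.End ℝ g := -N with hC
    have hAC : Commute A C := hAN.neg_right
    have hCt : C ^ t = 0 := by
      rw [hC, neg_pow, htN, mul_zero]
    have hBC : B = A + C := by rw [hadd, hC]; abel
    have hBK : (B ^ (m + t)) x = 0 := by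
      rw [hBC, hAC.add_pow (m + t), LinearMap.sum_apply]
      apply Finset.sum_eq_zero
      intro i hi
      by_cases him : m ≤ i
      · have hswap : A ^ i * C ^ (m + t - i) = C ^ (m + t - i) * A ^ i :=
          (hAC.pow_pow i (m + t - i)).eq
        have hAix : (A ^ i) x = 0 := by
          have hdec : A ^ i = A ^ (i - m) * A ^ m := by
            rw [← pow_add]; congr 1; omega
          rw [hdec, Module.End.mul_apply, hm, hx, map_zero]
        rw [hswap]
        simp only [Module.End.mul_apply, Module.End.natCast_apply]
        rw [map_nsmul, hAix, smul_zero, map_zero]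
      · have hj : C ^ (m + t - i) = 0 := by
          have hdec : C ^ (m + t - i) = C ^ (m + t - i - t) * C ^ t := by
            rw [← pow_add]; congr 1; omega
          rw [hdec, hCt, mul_zero]
        simp only [Module.End.mul_apply, Module.End.natCast_apply]
        rw [hj]
        simp
    exact aux_peel S hS (m + t) x hBK

/-- The equivalent defining conditions for a homogeneous Φ-space to be a
regular Φ-space, for an automorphism φ of a finite-dimensional real Lie
algebra g, with A = φ − id, h = ker A, and g₀ = ⋃_{n≥1} ker(Aⁿ) the Fitting
null component. -/
theorem stmt_2 (g : Type*) [LieRing g] [LieAlgebra ℝ g] [FiniteDimensional ℝ g]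
    (φ : g ≃ₗ⁅ℝ⁆ g)
    (A : Module.End ℝ g) (hA : A = (φ.toLieHom : g →ₗ[ℝ] g) - LinearMap.id) :
    List.TFAE [
      -- (1) h = g₀
      LinearMap.ker A = ⨆ n : ℕ, LinearMap.ker (A ^ (n + 1)),
      -- (2) g = h ⊕ A(g)
      IsCompl (LinearMap.ker A) (LinearMap.range A),
      -- (3) A restricted to A(g) is injective
      ∀ X ∈ LinearMap.range A, A X = 0 → X = 0,
      -- (4) A²X = 0 → AX = 0
      ∀ X : g, A (A X) = 0 → A X = 0,
      -- (5) h = ker(φ_s − id) for the semisimple part φ_s of φ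
      ∀ S : Module.End ℝ g, IsSemisimpleEnd S →
        Commute (φ.toLieHom : g →ₗ[ℝ] g) S →
        IsNilpotent ((φ.toLieHom : g →ₗ[ℝ] g) - S) →
        LinearMap.ker A = LinearMap.ker (S - 1)] := by
  set P : Module.End ℝ g := (φ.toLieHom : g →ₗ[ℝ] g) with hP
  have hA1 : A = P - 1 := by rw [hA, hP, Module.End.one_eq_id]
  tfae_have 1 → 4 := by
    intro h1 X hX
    have hmem : X ∈ ⨆ n : ℕ, LinearMap.ker (A ^ (n + 1)) := by
      refine le_iSup (fun n => LinearMap.ker (A ^ (n + 1))) 1 ?_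
      rw [LinearMap.mem_ker]
      show (A ^ 2) X = 0
      rw [pow_two, Module.End.mul_apply]; exact hX
    rw [← h1] at hmem
    exact LinearMap.mem_ker.mp hmem
  tfae_have 4 → 1 := by
    intro h4
    have hker : ∀ n : ℕ, LinearMap.ker (A ^ (n + 1)) = LinearMap.ker A := by
      intro n
      induction n with
      | zero => rw [pow_one]
      | succ n ih =>
        apply le_antisymm
        · intro x hx
          rw [LinearMap.mem_ker] at hx ⊢
          have h1 : (A ^ (n + 1)) (A x) = 0 := by
            rw [← Module.End.mul_apply, ← pow_succ]; exact hx
          have h2 : A x ∈ LinearMap.ker (A ^ (n + 1)) := LinearMap.mem_ker.mpr h1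
          rw [ih, LinearMap.mem_ker] at h2
          exact h4 x h2
        · intro x hx
          rw [LinearMap.mem_ker] at hx ⊢
          rw [pow_succ, Module.End.mul_apply, hx, map_zero]
    simp [hker]
  tfae_have 4 → 3 := by
    rintro h4 X ⟨Y, rfl⟩ hAX
    exact h4 Y hAX
  tfae_have 3 → 4 := by
    intro h3 X hX
    exact h3 (A X) ⟨X, rfl⟩ hX
  tfae_have 2 → 3 := by
    rintro h2 X hXr hAX
    exact (Submodule.disjoint_def.mp h2.disjoint) X (LinearMap.mem_ker.mpr hAX) hXr
  tfae_have 3 → 2 := by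
    intro h3
    have hdisj : Disjoint (LinearMap.ker A) (LinearMap.range A) := by
      rw [Submodule.disjoint_def]
      intro x hxk hxr
      exact h3 x hxr (LinearMap.mem_ker.mp hxk)
    refine ⟨hdisj, codisjoint_iff.mpr ?_⟩
    apply Submodule.eq_top_of_disjoint
    · rw [add_comm]; exact (LinearMap.finrank_range_add_finrank_ker A).ge
    · exact hdisj
  tfae_have 1 → 5 := by
    intro h1 S hS hcomm hnil
    exact h1.trans (aux_key P S A hA1 hS hcomm hnil).symm
  tfae_have 5 → 1 := by
    intro h5
    obtain ⟨n, hnmem, s, hsmem, hnil, hss, hPns⟩ :=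
      Module.End.exists_isNilpotent_isSemisimple (K := ℝ) (f := P)
    have hcomm : Commute P s := Algebra.commute_of_mem_adjoin_self hsmem
    have hPs : P - s = n := by rw [hPns]; abel
    have hsEnd : IsSemisimpleEnd s := by
      intro p hp
      obtain ⟨q, hq, hcompl⟩ := (Module.End.isSemisimple_iff.mp hss) p
        ((Module.End.mem_invtSubmodule _).mpr fun x hx => Submodule.mem_comap.mpr (hp x hx))
      exact ⟨q, fun x hx => Submodule.mem_comap.mp
        (((Module.End.mem_invtSubmodule _).mp hq) hx), hcompl⟩
    have := h5 s hsEnd hcomm (hPs ▸ hnil)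
    rw [this]
    exact aux_key P s A hA1 hsEnd hcomm (hPs ▸ hnil)
  tfae_finish
end

section
/- Let V be a nonzero finite-dimensional real vector space and θ a linear endomorphism of V with ker(θ − id) = 0 (as holds for the operator θ of a regular Φ-space). Let ν be the minimal polynomial of θ, let s̃ be the number of distinct monic irreducible factors of ν over ℝ, and let s be the number of those factors that have degree 2. Then: (1) the set {P ∈ ℝ[θ] : P² = id} has exactly 2^s̃ elements; (2) there exists J ∈ ℝ[θ] with J² = −id if and only if s = s̃, and in that case {J ∈ ℝ[θ] : J² = −id} has exactly 2^s elements; (3) the set {f ∈ ℝ[θ] : f³ + f = 0 and f ≠ 0} has exactly 3^s − 1 elements, and if s = s̃ then exactly 2^s of these satisfy f² = −id while the remaining 3^s − 2^s − 1 have nonzero kernel; (4) the set {h ∈ ℝ[θ] : h³ = h} has exactly 3^s̃ elements. -/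
open UniqueFactorizationMonoid

open Polynomial




lemma aux_quad_eq {p : ℝ[X]} (hm : p.Monic) (hd : p.natDegree = 2) :
    p = X ^ 2 + C (p.coeff 1) * X + C (p.coeff 0) := by
  ext n
  rcases n with _ | _ | _ | n
  · simp
  · simp [coeff_X_pow]
  · simpa [coeff_X_pow] using (hd ▸ hm.coeff_natDegree : p.coeff 2 = 1)
  · rw [coeff_eq_zero_of_natDegree_lt (by omega)]
    simp [coeff_X_pow, coeff_C]

lemma aux_no_root {p : ℝ[X]} (hp : Irreducible p) (hd : p.natDegree = 2) (x : ℝ) :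
    ¬ p.IsRoot x := by
  intro hx
  obtain ⟨g, hg⟩ := dvd_iff_isRoot.mpr hx
  have hg0 : g ≠ 0 := by rintro rfl; rw [mul_zero] at hg; exact hp.ne_zero hg
  have hdeg : g.natDegree = 1 := by
    have := natDegree_mul (X_sub_C_ne_zero x) hg0
    rw [← hg, hd, natDegree_X_sub_C] at this
    omega
  rcases hp.isUnit_or_isUnit hg with h | h
  · have := natDegree_eq_zero_of_isUnit h
    simp [natDegree_X_sub_C] at this
  · have := natDegree_eq_zero_of_isUnit h
    omega

lemma aux_disc_neg {p : ℝ[X]} (hm : p.Monic) (hp : Irreducible p) (hd : p.natDegree = 2) :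
    0 < 4 * p.coeff 0 - p.coeff 1 ^ 2 := by
  by_contra h
  push_neg at h
  set b := p.coeff 1
  set c := p.coeff 0
  have hnn : 0 ≤ b ^ 2 - 4 * c := by linarith
  have hs : Real.sqrt (b ^ 2 - 4 * c) ^ 2 = b ^ 2 - 4 * c := Real.sq_sqrt hnn
  apply aux_no_root hp hd ((-b + Real.sqrt (b ^ 2 - 4 * c)) / 2)
  have := aux_quad_eq hm hd
  rw [IsRoot, this]
  simp only [eval_add, eval_pow, eval_mul, eval_X, eval_C]
  nlinarith [hs]

section
variable {p : ℝ[X]} (hp : Irreducible p)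

lemma aux_not_dvd_two (hp : Irreducible p) : ¬ p ∣ (2 : ℝ[X]) := by
  intro h
  have h2 : (2 : ℝ[X]) ≠ 0 := by norm_num
  have := natDegree_le_of_dvd h h2
  have h0 : (2 : ℝ[X]).natDegree = 0 := natDegree_ofNat 2
  have := hp.natDegree_pos
  omega

lemma aux_sqrt_neg_one {p : ℝ[X]} (hm : p.Monic) (hp : Irreducible p)
    (hd : p.natDegree = 2) (k : ℕ) : ∃ q : ℝ[X], p ^ k ∣ q ^ 2 + 1 := by
  induction k with
  | zero => exact ⟨0, one_dvd _⟩
  | succ n ih =>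
    rcases n with _ | m
    · -- base case: k = 1
      set b := p.coeff 1 with hb
      set c := p.coeff 0 with hc
      have hD : 0 < 4 * c - b ^ 2 := aux_disc_neg hm hp hd
      set D := 4 * c - b ^ 2 with hDdef
      set e := (Real.sqrt D)⁻¹ with he
      have hDe : D * e ^ 2 = 1 := by
        rw [he, ← Real.sqrt_sq hD.le]
        field_simp
        rw [Real.sq_sqrt (Real.sqrt_nonneg _)]
      have hCe : C D * C e ^ 2 = 1 := by
        rw [← C_pow, ← C_mul, hDe, C_1]
      have hCD2 : C D = 4 * C c - C b ^ 2 := by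
        rw [hDdef]
        push_cast [C_sub, C_mul, C_pow]
        rw [map_ofNat]
      refine ⟨C e * (2 * X + C b), ?_⟩
      have key : C D * ((C e * (2 * X + C b)) ^ 2 + 1) = 4 * p := by
        conv_rhs => rw [aux_quad_eq hm hd]
        rw [← hb, ← hc]
        linear_combination (2 * X + C b) ^ 2 * hCe + hCD2
      have hunit : IsUnit (C D) := isUnit_C.mpr (isUnit_iff_ne_zero.mpr hD.ne')
      rw [pow_one]
      have : p ∣ C D * ((C e * (2 * X + C b)) ^ 2 + 1) := by
        rw [key]; exact ⟨4, mul_comm 4 p⟩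
      exact (IsUnit.dvd_mul_left hunit).mp this
    · -- inductive step
      obtain ⟨q, t, ht⟩ := ih
      have hpq1 : p ∣ q ^ 2 + 1 :=
        dvd_trans (dvd_pow_self p (Nat.succ_ne_zero m)) ⟨t, ht⟩
      have hpq : ¬ p ∣ q := by
        intro hdvd
        have : p ∣ (1 : ℝ[X]) := (dvd_add_right (hdvd.mul_right q |>.trans (by rw [← sq]))).mp hpq1
        exact hp.not_isUnit (isUnit_of_dvd_one this)
      have hprime : Prime p := hp.prime
      have hco : IsCoprime p (2 * q) := by
        rcases hp.isCoprime_or_dvd (2 * q) with h | h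
        · exact h
        · rcases hprime.dvd_mul.mp h with h2 | hq'
          · exact absurd h2 (aux_not_dvd_two hp)
          · exact absurd hq' hpq
      obtain ⟨a, b', hab⟩ := hco
      refine ⟨q + (-t * b') * p ^ (m + 1), t * a + (t * b') ^ 2 * p ^ m, ?_⟩
      linear_combination ht - p ^ (m + 1) * t * hab
section Factor

variable {p : ℝ[X]} {k : ℕ}

lemma aux_mk_eq_mk (p : ℝ[X]) (k : ℕ) (a b : ℝ[X]) :
    Ideal.Quotient.mk (Ideal.span {p ^ k}) a = Ideal.Quotient.mk (Ideal.span {p ^ k}) b ↔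
      p ^ k ∣ a - b := by
  rw [Ideal.Quotient.eq, Ideal.mem_span_singleton]

lemma aux_pk_not_dvd_one (hp : Irreducible p) (hk : k ≠ 0) : ¬ p ^ k ∣ (1 : ℝ[X]) :=
  fun h => hp.not_isUnit (isUnit_of_dvd_one ((dvd_pow_self p hk).trans h))

lemma aux_pk_not_dvd_two (hp : Irreducible p) (hk : k ≠ 0) : ¬ p ^ k ∣ (2 : ℝ[X]) :=
  fun h => aux_not_dvd_two hp ((dvd_pow_self p hk).trans h)

lemma aux_one_ne_negone (hp : Irreducible p) (hk : k ≠ 0) :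
    (1 : ℝ[X] ⧸ Ideal.span {p ^ k}) ≠ -1 := by
  simp only [← map_one (Ideal.Quotient.mk (Ideal.span {p ^ k})), ← map_neg,
    ne_eq, aux_mk_eq_mk p k]
  intro h
  exact aux_pk_not_dvd_two hp hk (by norm_num at h; simpa [two_mul] using h)

lemma aux_zero_ne_one (hp : Irreducible p) (hk : k ≠ 0) :
    (0 : ℝ[X] ⧸ Ideal.span {p ^ k}) ≠ 1 := by
  simp only [← map_one (Ideal.Quotient.mk (Ideal.span {p ^ k})),
    ← map_zero (Ideal.Quotient.mk (Ideal.span {p ^ k})), ne_eq, aux_mk_eq_mk p k]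
  intro h
  exact aux_pk_not_dvd_one hp hk (by simpa using h.neg_right)

lemma aux_zero_ne_negone (hp : Irreducible p) (hk : k ≠ 0) :
    (0 : ℝ[X] ⧸ Ideal.span {p ^ k}) ≠ -1 := by
  intro h
  exact aux_zero_ne_one hp hk (by rw [← neg_neg (1 : ℝ[X] ⧸ Ideal.span {p ^ k}), ← h, neg_zero])

lemma aux_sol_sq_one (hp : Irreducible p) (hk : k ≠ 0) :
    {x : ℝ[X] ⧸ Ideal.span {p ^ k} | x ^ 2 = 1} = {1, -1} := by
  ext x
  obtain ⟨q, rfl⟩ := Ideal.Quotient.mk_surjective x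
  simp only [Set.mem_setOf_eq, Set.mem_insert_iff, Set.mem_singleton_iff,
    ← map_one (Ideal.Quotient.mk (Ideal.span {p ^ k})), ← map_neg, ← map_pow,
    aux_mk_eq_mk p k]
  constructor
  · intro h
    have h' : p ^ k ∣ (q - 1) * (q + 1) := by
      have e : (q - 1) * (q + 1) = q ^ 2 - 1 := by ring
      rw [e]; exact h
    by_cases hd1 : p ∣ q - 1
    · left
      refine hp.prime.pow_dvd_of_dvd_mul_right k ?_ h'
      intro hd2
      exact aux_not_dvd_two hp (by have := hd2.sub hd1; norm_num at this; exact this)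
    · right
      have := hp.prime.pow_dvd_of_dvd_mul_left k hd1 h'
      simpa [sub_neg_eq_add] using this
  · rintro (h | h)
    · have e : q ^ 2 - 1 = (q - 1) * (q + 1) := by ring
      rw [e]; exact h.mul_right _
    · have e : q ^ 2 - 1 = (q + 1) * (q - 1) := by ring
      rw [e]
      exact Dvd.dvd.mul_right (by simpa [sub_neg_eq_add] using h) _
end Factor

section Factor2
variable {p : ℝ[X]} {k : ℕ}

lemma aux_sol_cube (hp : Irreducible p) (hk : k ≠ 0) :
    {x : ℝ[X] ⧸ Ideal.span {p ^ k} | x ^ 3 = x} = {0, 1, -1} := by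
  ext x
  obtain ⟨q, rfl⟩ := Ideal.Quotient.mk_surjective x
  simp only [Set.mem_setOf_eq, Set.mem_insert_iff, Set.mem_singleton_iff,
    ← map_one (Ideal.Quotient.mk (Ideal.span {p ^ k})),
    ← map_zero (Ideal.Quotient.mk (Ideal.span {p ^ k})), ← map_neg, ← map_pow,
    aux_mk_eq_mk p k]
  have hone : ¬ p ∣ (1 : ℝ[X]) := fun h => hp.not_isUnit (isUnit_of_dvd_one h)
  constructor
  · intro h
    have h' : p ^ k ∣ q * ((q - 1) * (q + 1)) := by
      have e : q * ((q - 1) * (q + 1)) = q ^ 3 - q := by ring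
      rw [e]; exact h
    by_cases hq : p ∣ q
    · left
      have hnd : ¬ p ∣ (q - 1) * (q + 1) := by
        intro hd
        rcases hp.prime.dvd_mul.mp hd with h1 | h1
        · exact hone (by simpa using hq.sub h1)
        · exact hone (by simpa using h1.sub hq)
      simpa using hp.prime.pow_dvd_of_dvd_mul_right k hnd h'
    · have h'' : p ^ k ∣ (q - 1) * (q + 1) := hp.prime.pow_dvd_of_dvd_mul_left k hq h'
      by_cases hd1 : p ∣ q - 1
      · right; left
        refine hp.prime.pow_dvd_of_dvd_mul_right k ?_ h''
        intro hd2
        exact aux_not_dvd_two hp (by have := hd2.sub hd1; norm_num at this; exact this)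
      · right; right
        have := hp.prime.pow_dvd_of_dvd_mul_left k hd1 h''
        simpa [sub_neg_eq_add] using this
  · rintro (h | h | h)
    · have e : q ^ 3 - q = q * (q - 1) * (q + 1) := by ring
      rw [e]
      exact ((by simpa using h : p ^ k ∣ q).mul_right _).mul_right _
    · have e : q ^ 3 - q = (q - 1) * (q * (q + 1)) := by ring
      rw [e]; exact h.mul_right _
    · have e : q ^ 3 - q = (q + 1) * (q * (q - 1)) := by ring
      rw [e]
      exact Dvd.dvd.mul_right (by simpa [sub_neg_eq_add] using h) _

lemma aux_sol_fstr (hp : Irreducible p) (hk : k ≠ 0) :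
    {x : ℝ[X] ⧸ Ideal.span {p ^ k} | x ^ 3 + x = 0} =
      insert 0 {x : ℝ[X] ⧸ Ideal.span {p ^ k} | x ^ 2 = -1} := by
  ext x
  obtain ⟨q, rfl⟩ := Ideal.Quotient.mk_surjective x
  simp only [Set.mem_setOf_eq, Set.mem_insert_iff,
    ← map_one (Ideal.Quotient.mk (Ideal.span {p ^ k})),
    ← map_zero (Ideal.Quotient.mk (Ideal.span {p ^ k})), ← map_neg, ← map_pow,
    ← map_add, aux_mk_eq_mk p k]
  have hone : ¬ p ∣ (1 : ℝ[X]) := fun h => hp.not_isUnit (isUnit_of_dvd_one h)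
  constructor
  · intro h
    have h' : p ^ k ∣ q * (q ^ 2 + 1) := by
      have e : q * (q ^ 2 + 1) = q ^ 3 + q - 0 := by ring
      rw [e]; exact h
    by_cases hq : p ∣ q
    · left
      have hnd : ¬ p ∣ q ^ 2 + 1 := by
        intro hd
        have : p ∣ q ^ 2 := (hq.mul_right q).trans (by rw [← sq])
        exact hone (by simpa using hd.sub this)
      simpa using hp.prime.pow_dvd_of_dvd_mul_right k hnd h'
    · right
      have := hp.prime.pow_dvd_of_dvd_mul_left k hq h'
      simpa [sub_neg_eq_add] using this
  · rintro (h | h)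
    · have h' : p ^ k ∣ q := by simpa using h
      have e : q ^ 3 + q - 0 = q * (q ^ 2 + 1) := by ring
      rw [e]; exact h'.mul_right _
    · have h' : p ^ k ∣ q ^ 2 + 1 := by simpa [sub_neg_eq_add] using h
      have e : q ^ 3 + q - 0 = (q ^ 2 + 1) * q := by ring
      rw [e]; exact h'.mul_right _

lemma aux_sol_negone_empty (hm : p.Monic) (hp : Irreducible p) (hk : k ≠ 0)
    (hd : p.natDegree ≠ 2) :
    {x : ℝ[X] ⧸ Ideal.span {p ^ k} | x ^ 2 = -1} = ∅ := by
  have hd1 : p.natDegree = 1 := by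
    have := hp.natDegree_le_two
    have := hp.natDegree_pos
    omega
  ext x
  simp only [Set.mem_setOf_eq, Set.mem_empty_iff_false, iff_false]
  obtain ⟨q, rfl⟩ := Ideal.Quotient.mk_surjective x
  simp only [← map_one (Ideal.Quotient.mk (Ideal.span {p ^ k})), ← map_neg, ← map_pow,
    aux_mk_eq_mk p k]
  intro h
  have h1 : p ∣ q ^ 2 + 1 := by
    have := (dvd_pow_self p hk).trans h
    simpa [sub_neg_eq_add] using this
  have hroot : p.eval (-(p.coeff 0)) = 0 := by
    rw [hm.eq_X_add_C hd1]
    simp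
  obtain ⟨g, hg⟩ := h1
  have := congrArg (fun r => r.eval (-(p.coeff 0))) hg
  simp only [eval_add, eval_pow, eval_one, eval_mul, hroot, zero_mul] at this
  nlinarith [sq_nonneg (q.eval (-(p.coeff 0)))]

lemma aux_exists_j (hm : p.Monic) (hp : Irreducible p) (hd : p.natDegree = 2) :
    ∃ j : ℝ[X] ⧸ Ideal.span {p ^ k}, j ^ 2 = -1 := by
  obtain ⟨q, hq⟩ := aux_sqrt_neg_one hm hp hd k
  refine ⟨Ideal.Quotient.mk _ q, ?_⟩
  rw [show (-1 : ℝ[X] ⧸ Ideal.span {p ^ k}) = Ideal.Quotient.mk _ (-1) by simp,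
    ← map_pow, aux_mk_eq_mk p k]
  simpa [sub_neg_eq_add] using hq

lemma aux_sol_negone_pair (hp : Irreducible p) (hk : k ≠ 0)
    {j : ℝ[X] ⧸ Ideal.span {p ^ k}} (hj : j ^ 2 = -1) :
    {x : ℝ[X] ⧸ Ideal.span {p ^ k} | x ^ 2 = -1} = {j, -j} := by
  obtain ⟨w, rfl⟩ := Ideal.Quotient.mk_surjective j
  have hw : p ^ k ∣ w ^ 2 + 1 := by
    rw [show (-1 : ℝ[X] ⧸ Ideal.span {p ^ k}) = Ideal.Quotient.mk _ (-1) by simp,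
      ← map_pow, aux_mk_eq_mk p k] at hj
    simpa [sub_neg_eq_add] using hj
  have hpw : ¬ p ∣ w := by
    intro hd
    have h1 : p ∣ w ^ 2 := (hd.mul_right w).trans (by rw [← sq])
    have := ((dvd_pow_self p hk).trans hw).sub h1
    exact hp.not_isUnit (isUnit_of_dvd_one (by simpa using this))
  ext x
  obtain ⟨q, rfl⟩ := Ideal.Quotient.mk_surjective x
  simp only [Set.mem_setOf_eq, Set.mem_insert_iff, Set.mem_singleton_iff,
    ← map_one (Ideal.Quotient.mk (Ideal.span {p ^ k})), ← map_neg, ← map_pow,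
    aux_mk_eq_mk p k]
  constructor
  · intro h
    have h' : p ^ k ∣ (q - w) * (q + w) := by
      have hq : p ^ k ∣ q ^ 2 + 1 := by simpa [sub_neg_eq_add] using h
      have e : (q - w) * (q + w) = (q ^ 2 + 1) - (w ^ 2 + 1) := by ring
      rw [e]; exact hq.sub hw
    by_cases hd1 : p ∣ q - w
    · left
      refine hp.prime.pow_dvd_of_dvd_mul_right k ?_ h'
      intro hd2
      have : p ∣ 2 * w := by have := hd2.sub hd1; convert this using 1; ring
      rcases hp.prime.dvd_mul.mp this with h2 | h2
      · exact aux_not_dvd_two hp h2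
      · exact hpw h2
    · right
      have := hp.prime.pow_dvd_of_dvd_mul_left k hd1 h'
      simpa [sub_neg_eq_add] using this
  · rintro (h | h)
    · have e : q ^ 2 - -1 = (q - w) * (q + w) + (w ^ 2 + 1) := by ring
      rw [e]; exact dvd_add (h.mul_right _) hw
    · have h' : p ^ k ∣ q + w := by simpa [sub_neg_eq_add] using h
      have e : q ^ 2 - -1 = (q + w) * (q - w) + (w ^ 2 + 1) := by ring
      rw [e]; exact dvd_add (h'.mul_right _) hw

lemma aux_j_ne_negj (hp : Irreducible p) (hk : k ≠ 0)
    {j : ℝ[X] ⧸ Ideal.span {p ^ k}} (hj : j ^ 2 = -1) : j ≠ -j := by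
  obtain ⟨w, rfl⟩ := Ideal.Quotient.mk_surjective j
  have hw : p ^ k ∣ w ^ 2 + 1 := by
    rw [show (-1 : ℝ[X] ⧸ Ideal.span {p ^ k}) = Ideal.Quotient.mk _ (-1) by simp,
      ← map_pow, aux_mk_eq_mk p k] at hj
    simpa [sub_neg_eq_add] using hj
  have hpw : ¬ p ∣ w := by
    intro hd
    have h1 : p ∣ w ^ 2 := (hd.mul_right w).trans (by rw [← sq])
    have := ((dvd_pow_self p hk).trans hw).sub h1
    exact hp.not_isUnit (isUnit_of_dvd_one (by simpa using this))
  intro h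
  rw [← map_neg, aux_mk_eq_mk p k] at h
  have h2 : p ∣ 2 * w := by
    have := (dvd_pow_self p hk).trans h
    convert this using 1; ring
  rcases hp.prime.dvd_mul.mp h2 with h3 | h3
  · exact aux_not_dvd_two hp h3
  · exact hpw h3

end Factor2

lemma aux_count {ι : Type*} [Fintype ι] {A : Type*} [CommRing A] {R : ι → Type*}
    [∀ i, CommRing (R i)] (e : A ≃+* ∀ i, R i) (QA : A → Prop) (Q : ∀ i, R i → Prop)
    (hQ : ∀ x, QA x ↔ ∀ i, Q i (e x i)) (c : ι → ℕ)
    (hc : ∀ i, {y : R i | Q i y}.ncard = c i) :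
    {x : A | QA x}.ncard = ∏ i, c i := by
  rw [← Nat.card_coe_set_eq]
  have e1 : {x : A // QA x} ≃ {y : ∀ i, R i // ∀ i, Q i (y i)} :=
    Equiv.subtypeEquiv e.toEquiv hQ
  have e0 : ↥{x : A | QA x} ≃ {x : A // QA x} := Equiv.subtypeEquivRight fun x => Iff.rfl
  rw [Nat.card_congr (e0.trans (e1.trans Equiv.subtypePiEquivPi)), Nat.card_pi]
  refine Finset.prod_congr rfl fun i _ => ?_
  rw [← hc i, ← Nat.card_coe_set_eq]
  exact Nat.card_congr (Equiv.subtypeEquivRight fun _ => Iff.rfl)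

lemma aux_ker_iff (V : Type*) [AddCommGroup V] [Module ℝ V] [FiniteDimensional ℝ V]
    (f : Module.End ℝ V) (hf : f ^ 3 + f = 0) :
    LinearMap.ker f ≠ ⊥ ↔ f ^ 2 ≠ -1 := by
  constructor
  · intro hk h2
    apply hk
    have hinv : (-f) * f = 1 := by
      have : f * f = -1 := by rw [← sq]; exact h2
      rw [neg_mul, this, neg_neg]
    exact LinearMap.ker_eq_bot_of_inverse hinv
  · intro h2 hk
    apply h2
    have hinj := LinearMap.ker_eq_bot.mp hk
    have hm : f * (f ^ 2 + 1) = 0 := by rw [mul_add, mul_one, ← pow_succ']; exact hf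
    have : f ^ 2 + 1 = 0 := by
      ext v
      apply hinj
      have := congrArg (fun g => g v) hm
      simpa using this
    exact eq_neg_of_add_eq_zero_left this

set_option maxHeartbeats 1000000 in
/-- Counting of canonical structures of classical type: for θ a linear
endomorphism of a nonzero finite-dimensional real vector space with
ker(θ − id) = 0, with ν the minimal polynomial of θ, s̃ the number of its
distinct monic irreducible factors over ℝ, and s the number of those of
degree 2, the sets of canonical structures P, J, f, h in ℝ[θ] have
exactly 2^s̃, 2^s, 3^s − 1, 3^s̃ elements respectively. -/
theorem stmt_3 (V : Type*) [AddCommGroup V] [Module ℝ V] [FiniteDimensional ℝ V]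
    [Nontrivial V]
    (θ : Module.End ℝ V) (hθ : LinearMap.ker (θ - 1) = ⊥)
    (stil s : ℕ)
    (hstil : stil = (normalizedFactors (minpoly ℝ θ)).toFinset.card)
    (hs : s = ((normalizedFactors (minpoly ℝ θ)).toFinset.filter
      (fun p => p.natDegree = 2)).card) :
    -- (1) canonical almost product structures
    {P : Module.End ℝ V | (∃ p : Polynomial ℝ, P = Polynomial.aeval θ p) ∧
      P ^ 2 = 1}.ncard = 2 ^ stil ∧
    -- (2) canonical almost complex structures
    ((∃ J : Module.End ℝ V, (∃ p : Polynomial ℝ, J = Polynomial.aeval θ p) ∧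
      J ^ 2 = -1) ↔ s = stil) ∧
    (s = stil →
      {J : Module.End ℝ V | (∃ p : Polynomial ℝ, J = Polynomial.aeval θ p) ∧
        J ^ 2 = -1}.ncard = 2 ^ s) ∧
    -- (3) canonical f-structures
    {f : Module.End ℝ V | (∃ p : Polynomial ℝ, f = Polynomial.aeval θ p) ∧
      f ^ 3 + f = 0 ∧ f ≠ 0}.ncard = 3 ^ s - 1 ∧
    (s = stil →
      {f : Module.End ℝ V | (∃ p : Polynomial ℝ, f = Polynomial.aeval θ p) ∧
        f ^ 3 + f = 0 ∧ f ^ 2 = -1}.ncard = 2 ^ s ∧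
      {f : Module.End ℝ V | (∃ p : Polynomial ℝ, f = Polynomial.aeval θ p) ∧
        f ^ 3 + f = 0 ∧ f ≠ 0 ∧ LinearMap.ker f ≠ ⊥}.ncard = 3 ^ s - 2 ^ s - 1) ∧
    -- (4) canonical h-structures
    {h : Module.End ℝ V | (∃ p : Polynomial ℝ, h = Polynomial.aeval θ p) ∧
      h ^ 3 = h}.ncard = 3 ^ stil := by
  classical
  have hint : IsIntegral ℝ θ := Algebra.IsIntegral.isIntegral θ
  set ν : Polynomial ℝ := minpoly ℝ θ with hνdef
  have hm : ν.Monic := minpoly.monic hint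
  have hν0 : ν ≠ 0 := hm.ne_zero
  have hdegpos : 0 < ν.natDegree := minpoly.natDegree_pos hint
  set F := (normalizedFactors ν).toFinset with hF
  set kk : ℝ[X] → ℕ := fun i => (normalizedFactors ν).count i with hkk
  have hirr : ∀ i ∈ F, Irreducible i := fun i hi =>
    irreducible_of_normalized_factor i (Multiset.mem_toFinset.mp hi)
  have hnorm : ∀ i ∈ F, normalize i = i := fun i hi =>
    normalize_normalized_factor i (Multiset.mem_toFinset.mp hi)
  have hmon : ∀ i ∈ F, (i : ℝ[X]).Monic := by
    intro i hi
    have := Polynomial.monic_normalize (p := i) (hirr i hi).ne_zero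
    rwa [hnorm i hi] at this
  have hkpos : ∀ i ∈ F, kk i ≠ 0 := fun i hi =>
    Multiset.count_ne_zero.mpr (Multiset.mem_toFinset.mp hi)
  have hprod : ∏ i ∈ F, i ^ kk i = ν := by
    have h1 : (normalizedFactors ν).prod = ∏ i ∈ F, i ^ kk i := by
      rw [hF]; exact Finset.prod_multiset_count _
    have h2 : Associated (normalizedFactors ν).prod ν := prod_normalizedFactors hν0
    rw [h1] at h2
    refine Polynomial.eq_of_monic_of_associated ?_ hm h2
    exact Polynomial.monic_prod_of_monic _ _ fun i hi => (hmon i hi).pow _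
  have hcpbase : ∀ i ∈ F, ∀ j ∈ F, i ≠ j → IsCoprime (i : ℝ[X]) j := by
    intro i hi j hj hij
    rcases (hirr i hi).isCoprime_or_dvd j with h | h
    · exact h
    · exact absurd ((((hirr i hi).associated_of_dvd (hirr j hj) h)).eq_of_normalized
        (hnorm i hi) (hnorm j hj)) hij
  have hpair : Pairwise (Function.onFun IsCoprime fun i : F => Ideal.span {(i : ℝ[X]) ^ kk (i : ℝ[X])}) := by
    intro i j hij
    refine (Ideal.isCoprime_span_singleton_iff _ _).mpr ?_
    exact IsCoprime.pow (hcpbase i i.2 j j.2 (fun h => hij (Subtype.ext h)))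
  have hspan : (⨅ i : F, Ideal.span {(i : ℝ[X]) ^ kk (i : ℝ[X])}) = Ideal.span {ν} := by
    rw [Ideal.iInf_span_singleton (ι := F) (I := fun i => (i : ℝ[X]) ^ kk (i : ℝ[X]))
      (fun i j hij => IsCoprime.pow (hcpbase i i.2 j j.2 (fun h => hij (Subtype.ext h))))]
    congr 1
    rw [Finset.prod_coe_sort F (fun a => a ^ kk a), hprod]
  let e : (ℝ[X] ⧸ Ideal.span {ν}) ≃+*
      ((i : F) → ℝ[X] ⧸ Ideal.span {(i : ℝ[X]) ^ kk (i : ℝ[X])}) :=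
    (Ideal.quotEquivOfEq hspan.symm).trans (Ideal.quotientInfRingEquivPiQuotient _ hpair)
  haveI hAAnt : Nontrivial (ℝ[X] ⧸ Ideal.span {ν}) := Ideal.Quotient.nontrivial_iff.mpr (by
    rw [Ne, Ideal.span_singleton_eq_top]
    exact Polynomial.not_isUnit_of_natDegree_pos ν hdegpos)
  -- the algebra map
  have haeval0 : ∀ a ∈ Ideal.span {ν}, (Polynomial.aeval θ).toRingHom a = 0 := by
    intro a ha
    obtain ⟨c, rfl⟩ := Ideal.mem_span_singleton.mp ha
    simp only [AlgHom.toRingHom_eq_coe, RingHom.coe_coe, map_mul]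
    rw [hνdef, minpoly.aeval, zero_mul]
  let φ : (ℝ[X] ⧸ Ideal.span {ν}) →+* Module.End ℝ V :=
    Ideal.Quotient.lift _ (Polynomial.aeval θ).toRingHom haeval0
  have hφmk : ∀ q : ℝ[X], φ (Ideal.Quotient.mk _ q) = Polynomial.aeval θ q := fun q =>
    Ideal.Quotient.lift_mk _ _ _
  have hφinj : Function.Injective φ := by
    rw [injective_iff_map_eq_zero]
    intro a ha
    obtain ⟨q, rfl⟩ := Ideal.Quotient.mk_surjective a
    rw [hφmk] at ha
    exact Ideal.Quotient.eq_zero_iff_mem.mpr (Ideal.mem_span_singleton.mpr (minpoly.dvd ℝ θ ha))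
  have himg : ∀ Q : Module.End ℝ V → Prop,
      {P : Module.End ℝ V | (∃ p : Polynomial ℝ, P = Polynomial.aeval θ p) ∧ Q P} =
        φ '' {x : ℝ[X] ⧸ Ideal.span {ν} | Q (φ x)} := by
    intro Q; ext P
    simp only [Set.mem_setOf_eq, Set.mem_image]
    constructor
    · rintro ⟨⟨q, rfl⟩, hQ⟩
      exact ⟨Ideal.Quotient.mk _ q, by rwa [hφmk], hφmk q⟩
    · rintro ⟨x, hx, rfl⟩
      obtain ⟨q, rfl⟩ := Ideal.Quotient.mk_surjective x
      exact ⟨⟨q, (hφmk q).symm⟩, hx⟩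
  have hncard : ∀ Q : Module.End ℝ V → Prop,
      {P : Module.End ℝ V | (∃ p : Polynomial ℝ, P = Polynomial.aeval θ p) ∧ Q P}.ncard =
        {x : ℝ[X] ⧸ Ideal.span {ν} | Q (φ x)}.ncard := by
    intro Q; rw [himg Q, Set.ncard_image_of_injective _ hφinj]
  -- per-factor counts
  have hC1 : ∀ i : F, {y : ℝ[X] ⧸ Ideal.span {(i : ℝ[X]) ^ kk (i : ℝ[X])} | y ^ 2 = 1}.ncard
      = 2 := by
    intro i
    rw [aux_sol_sq_one (hirr i i.2) (hkpos i i.2),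
      Set.ncard_pair (aux_one_ne_negone (hirr i i.2) (hkpos i i.2))]
  have hC4 : ∀ i : F, {y : ℝ[X] ⧸ Ideal.span {(i : ℝ[X]) ^ kk (i : ℝ[X])} | y ^ 3 = y}.ncard
      = 3 := by
    intro i
    rw [aux_sol_cube (hirr i i.2) (hkpos i i.2)]
    rw [Set.ncard_insert_of_notMem (by
      simp only [Set.mem_insert_iff, Set.mem_singleton_iff]
      push_neg
      exact ⟨aux_zero_ne_one (hirr i i.2) (hkpos i i.2),
        aux_zero_ne_negone (hirr i i.2) (hkpos i i.2)⟩),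
      Set.ncard_pair (aux_one_ne_negone (hirr i i.2) (hkpos i i.2))]
  have hC2 : ∀ i : F, (i : ℝ[X]).natDegree = 2 →
      {y : ℝ[X] ⧸ Ideal.span {(i : ℝ[X]) ^ kk (i : ℝ[X])} | y ^ 2 = -1}.ncard = 2 := by
    intro i hdeg
    obtain ⟨j, hj⟩ := aux_exists_j (k := kk (i:ℝ[X])) (hmon i i.2) (hirr i i.2) hdeg
    rw [aux_sol_negone_pair (hirr i i.2) (hkpos i i.2) hj,
      Set.ncard_pair (aux_j_ne_negj (hirr i i.2) (hkpos i i.2) hj)]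
  have hC3 : ∀ i : F,
      {y : ℝ[X] ⧸ Ideal.span {(i : ℝ[X]) ^ kk (i : ℝ[X])} | y ^ 3 + y = 0}.ncard
      = if (i : ℝ[X]).natDegree = 2 then 3 else 1 := by
    intro i
    rw [aux_sol_fstr (hirr i i.2) (hkpos i i.2)]
    by_cases hdeg : (i : ℝ[X]).natDegree = 2
    · rw [if_pos hdeg]
      obtain ⟨j, hj⟩ := aux_exists_j (k := kk (i:ℝ[X])) (hmon i i.2) (hirr i i.2) hdeg
      have hj0 : j ≠ 0 := by
        intro h
        rw [h] at hj
        exact aux_zero_ne_negone (hirr i i.2) (hkpos i i.2) (by rw [← hj]; ring)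
      rw [aux_sol_negone_pair (hirr i i.2) (hkpos i i.2) hj,
        Set.ncard_insert_of_notMem (by
          simp only [Set.mem_insert_iff, Set.mem_singleton_iff]
          push_neg
          refine ⟨fun h => hj0 h.symm, fun h => hj0 ?_⟩
          rw [← neg_neg j, ← h, neg_zero]),
        Set.ncard_pair (aux_j_ne_negj (hirr i i.2) (hkpos i i.2) hj)]
    · rw [if_neg hdeg, aux_sol_negone_empty (hmon i i.2) (hirr i i.2) (hkpos i i.2) hdeg]
      simp
  -- predicate transfer along e
  have hQ1 : ∀ x : ℝ[X] ⧸ Ideal.span {ν}, x ^ 2 = 1 ↔ ∀ i : F, (e x i) ^ 2 = 1 := by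
    intro x
    rw [← e.injective.eq_iff, map_pow, map_one, funext_iff]
    simp only [Pi.pow_apply, Pi.one_apply]
  have hQn : ∀ x : ℝ[X] ⧸ Ideal.span {ν}, x ^ 2 = -1 ↔ ∀ i : F, (e x i) ^ 2 = -1 := by
    intro x
    rw [← e.injective.eq_iff, map_pow, map_neg, map_one, funext_iff]
    simp only [Pi.pow_apply, Pi.neg_apply, Pi.one_apply]
  have hQf : ∀ x : ℝ[X] ⧸ Ideal.span {ν}, x ^ 3 + x = 0 ↔
      ∀ i : F, (e x i) ^ 3 + e x i = 0 := by
    intro x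
    rw [← e.injective.eq_iff, map_add, map_pow, map_zero, funext_iff]
    simp only [Pi.add_apply, Pi.pow_apply, Pi.zero_apply]
  have hQc : ∀ x : ℝ[X] ⧸ Ideal.span {ν}, x ^ 3 = x ↔ ∀ i : F, (e x i) ^ 3 = e x i := by
    intro x
    rw [← e.injective.eq_iff, map_pow, funext_iff]
    simp only [Pi.pow_apply]
  -- counts at the quotient level
  have count1 : {x : ℝ[X] ⧸ Ideal.span {ν} | x ^ 2 = 1}.ncard = 2 ^ stil := by
    have := aux_count e (fun x => x ^ 2 = 1) (fun i y => y ^ 2 = 1) hQ1 (fun _ => 2) hC1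
    rw [this, Finset.prod_const, Finset.card_univ, Fintype.card_coe, hstil]
  have count4 : {x : ℝ[X] ⧸ Ideal.span {ν} | x ^ 3 = x}.ncard = 3 ^ stil := by
    have := aux_count e (fun x => x ^ 3 = x) (fun i y => y ^ 3 = y) hQc (fun _ => 3) hC4
    rw [this, Finset.prod_const, Finset.card_univ, Fintype.card_coe, hstil]
  have countT : {x : ℝ[X] ⧸ Ideal.span {ν} | x ^ 3 + x = 0}.ncard = 3 ^ s := by
    have := aux_count e (fun x => x ^ 3 + x = 0) (fun i y => y ^ 3 + y = 0) hQf
      (fun i => if (i : ℝ[X]).natDegree = 2 then 3 else 1) hC3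
    rw [this, Finset.prod_coe_sort F (fun a => if a.natDegree = 2 then (3:ℕ) else 1),
      Finset.prod_ite, Finset.prod_const, Finset.prod_const_one, mul_one, hs]
  have hTfin : {x : ℝ[X] ⧸ Ideal.span {ν} | x ^ 3 + x = 0}.Finite := by
    have hne : {x : ℝ[X] ⧸ Ideal.span {ν} | x ^ 3 + x = 0}.ncard ≠ 0 := by
      rw [countT]; positivity
    rcases Set.finite_or_infinite {x : ℝ[X] ⧸ Ideal.span {ν} | x ^ 3 + x = 0} with h | h
    · exact h
    · exact absurd h.ncard hne
  have h0T : (0 : ℝ[X] ⧸ Ideal.span {ν}) ∈ {x : ℝ[X] ⧸ Ideal.span {ν} | x ^ 3 + x = 0} := by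
    simp [Set.mem_setOf_eq]
  -- the s = stil characterization
  have halliff : (∀ i : F, (i : ℝ[X]).natDegree = 2) ↔ s = stil := by
    rw [hs, hstil]
    constructor
    · intro h
      rw [Finset.filter_eq_self.mpr (fun x hx => h ⟨x, hx⟩)]
    · intro h i
      have heq : F.filter (fun p => p.natDegree = 2) = F :=
        Finset.eq_of_subset_of_card_le (Finset.filter_subset _ F) (le_of_eq h.symm)
      have hmem : (i : ℝ[X]) ∈ Finset.filter (fun p => p.natDegree = 2) F := by
        rw [heq]; exact i.2
      exact (Finset.mem_filter.mp hmem).2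
  have countU : (∀ i : F, (i : ℝ[X]).natDegree = 2) →
      {x : ℝ[X] ⧸ Ideal.span {ν} | x ^ 2 = -1}.ncard = 2 ^ s := by
    intro hall
    have := aux_count e (fun x => x ^ 2 = -1) (fun i y => y ^ 2 = -1) hQn (fun _ => 2)
      (fun i => hC2 i (hall i))
    rw [this, Finset.prod_const, Finset.card_univ, Fintype.card_coe, ← hstil,
      halliff.mp hall]
  refine ⟨?_, ?_, ?_, ?_, ?_, ?_⟩
  · -- (1)
    rw [hncard (fun P => P ^ 2 = 1)]
    have hset : {x : ℝ[X] ⧸ Ideal.span {ν} | (φ x) ^ 2 = 1} =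
        {x : ℝ[X] ⧸ Ideal.span {ν} | x ^ 2 = 1} := by
      ext x
      simp only [Set.mem_setOf_eq]
      rw [← map_pow, ← map_one φ, hφinj.eq_iff]
    rw [hset, count1]
  · -- (2a)
    rw [← halliff]
    constructor
    · rintro ⟨J, ⟨q, rfl⟩, hJ⟩ i
      have hx : (Ideal.Quotient.mk (Ideal.span {ν}) q) ^ 2 = -1 := by
        apply hφinj
        rw [map_pow, map_neg, map_one, hφmk]
        exact hJ
      have := (hQn _).mp hx i
      by_contra hdeg
      have hempty := aux_sol_negone_empty (hmon i i.2) (hirr i i.2) (hkpos i i.2) hdeg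
      have hmem : e (Ideal.Quotient.mk (Ideal.span {ν}) q) i ∈
          {y : ℝ[X] ⧸ Ideal.span {(i : ℝ[X]) ^ kk (i : ℝ[X])} | y ^ 2 = -1} := this
      rw [hempty] at hmem
      exact Set.notMem_empty _ hmem
    · intro hall
      choose j hj using fun i : F =>
        aux_exists_j (k := kk (i : ℝ[X])) (hmon i i.2) (hirr i i.2) (hall i)
      set x := e.symm j with hx
      have hx2 : x ^ 2 = -1 := by
        refine (hQn x).mpr (fun i => ?_)
        rw [hx, RingEquiv.apply_symm_apply]
        exact hj i
      obtain ⟨q, hq⟩ := Ideal.Quotient.mk_surjective x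
      refine ⟨φ x, ⟨q, by rw [← hq, hφmk]⟩, ?_⟩
      rw [← map_pow, hx2, map_neg, map_one]
  · -- (2b)
    intro hse
    rw [hncard (fun J => J ^ 2 = -1)]
    have hset : {x : ℝ[X] ⧸ Ideal.span {ν} | (φ x) ^ 2 = -1} =
        {x : ℝ[X] ⧸ Ideal.span {ν} | x ^ 2 = -1} := by
      ext x
      simp only [Set.mem_setOf_eq]
      rw [← map_pow, ← map_one φ, ← map_neg φ, hφinj.eq_iff]
    rw [hset, countU (halliff.mpr hse)]
  · -- (3a)
    rw [hncard (fun f => f ^ 3 + f = 0 ∧ f ≠ 0)]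
    have hset : {x : ℝ[X] ⧸ Ideal.span {ν} | (φ x) ^ 3 + φ x = 0 ∧ φ x ≠ 0} =
        {x : ℝ[X] ⧸ Ideal.span {ν} | x ^ 3 + x = 0} \ {0} := by
      ext x
      simp only [Set.mem_setOf_eq, Set.mem_diff, Set.mem_singleton_iff]
      rw [← map_pow, ← map_add, show (0 : Module.End ℝ V) = φ 0 from (map_zero φ).symm,
        hφinj.eq_iff, hφinj.ne_iff]
    rw [hset, Set.ncard_diff_singleton_of_mem h0T, countT]
  · -- (3b)
    intro hse
    have hall := halliff.mpr hse
    have hUfin : {x : ℝ[X] ⧸ Ideal.span {ν} | x ^ 2 = -1}.Finite := by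
      have hne : {x : ℝ[X] ⧸ Ideal.span {ν} | x ^ 2 = -1}.ncard ≠ 0 := by
        rw [countU hall]; positivity
      rcases Set.finite_or_infinite {x : ℝ[X] ⧸ Ideal.span {ν} | x ^ 2 = -1} with h | h
      · exact h
      · exact absurd h.ncard hne
    have hUsubT : {x : ℝ[X] ⧸ Ideal.span {ν} | x ^ 2 = -1} ⊆
        {x : ℝ[X] ⧸ Ideal.span {ν} | x ^ 3 + x = 0} := by
      intro x hx
      simp only [Set.mem_setOf_eq] at hx ⊢
      have hfact : x ^ 3 + x = x * (x ^ 2 + 1) := by ring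
      rw [hfact, hx]
      ring
    have h0U : (0 : ℝ[X] ⧸ Ideal.span {ν}) ∉ {x : ℝ[X] ⧸ Ideal.span {ν} | x ^ 2 = -1} := by
      simp only [Set.mem_setOf_eq]
      intro h
      rw [zero_pow (by norm_num)] at h
      exact one_ne_zero (neg_eq_zero.mp h.symm)
    constructor
    · rw [hncard (fun f => f ^ 3 + f = 0 ∧ f ^ 2 = -1)]
      have hset : {x : ℝ[X] ⧸ Ideal.span {ν} | (φ x) ^ 3 + φ x = 0 ∧ (φ x) ^ 2 = -1} =
          {x : ℝ[X] ⧸ Ideal.span {ν} | x ^ 2 = -1} := by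
        ext x
        simp only [Set.mem_setOf_eq]
        rw [← map_pow, ← map_add, show (0 : Module.End ℝ V) = φ 0 from (map_zero φ).symm,
          hφinj.eq_iff]
        rw [show (φ x) ^ 2 = φ (x ^ 2) by rw [map_pow],
          show (-1 : Module.End ℝ V) = φ (-1) by rw [map_neg, map_one], hφinj.eq_iff]
        constructor
        · rintro ⟨_, h2⟩; exact h2
        · intro h2
          refine ⟨?_, h2⟩
          have hfact : x ^ 3 + x = x * (x ^ 2 + 1) := by ring
          rw [hfact, h2]; ring
      rw [hset, countU hall]
    · have hker : {f : Module.End ℝ V | (∃ p : Polynomial ℝ, f = Polynomial.aeval θ p) ∧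
          f ^ 3 + f = 0 ∧ f ≠ 0 ∧ LinearMap.ker f ≠ ⊥} =
          {f : Module.End ℝ V | (∃ p : Polynomial ℝ, f = Polynomial.aeval θ p) ∧
          (f ^ 3 + f = 0 ∧ f ≠ 0 ∧ f ^ 2 ≠ -1)} := by
        ext f
        simp only [Set.mem_setOf_eq]
        constructor
        · rintro ⟨h1, h2, h3, h4⟩
          exact ⟨h1, h2, h3, (aux_ker_iff V f h2).mp h4⟩
        · rintro ⟨h1, h2, h3, h4⟩
          exact ⟨h1, h2, h3, (aux_ker_iff V f h2).mpr h4⟩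
      rw [hker, hncard (fun f => f ^ 3 + f = 0 ∧ f ≠ 0 ∧ f ^ 2 ≠ -1)]
      have hset : {x : ℝ[X] ⧸ Ideal.span {ν} |
          (φ x) ^ 3 + φ x = 0 ∧ φ x ≠ 0 ∧ (φ x) ^ 2 ≠ -1} =
          {x : ℝ[X] ⧸ Ideal.span {ν} | x ^ 3 + x = 0} \
            insert 0 {x : ℝ[X] ⧸ Ideal.span {ν} | x ^ 2 = -1} := by
        ext x
        simp only [Set.mem_setOf_eq, Set.mem_diff, Set.mem_insert_iff, not_or]
        rw [← map_pow, ← map_add, show (0 : Module.End ℝ V) = φ 0 from (map_zero φ).symm,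
          hφinj.eq_iff, hφinj.ne_iff,
          show (φ x) ^ 2 = φ (x ^ 2) by rw [map_pow],
          show (-1 : Module.End ℝ V) = φ (-1) by rw [map_neg, map_one], hφinj.ne_iff]
      rw [hset, Set.ncard_diff (Set.insert_subset h0T hUsubT) (hUfin.insert 0),
        Set.ncard_insert_of_notMem h0U hUfin, countT, countU hall, Nat.sub_sub]
  · -- (4)
    rw [hncard (fun h => h ^ 3 = h)]
    have hset : {x : ℝ[X] ⧸ Ideal.span {ν} | (φ x) ^ 3 = φ x} =
        {x : ℝ[X] ⧸ Ideal.span {ν} | x ^ 3 = x} := by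
      ext x
      simp only [Set.mem_setOf_eq]
      rw [← map_pow, hφinj.eq_iff]
    rw [hset, count4]
end
end

section
/- Let k ≥ 2, and set u = n if k = 2n + 1 and u = n − 1 if k = 2n. Let V be a finite-dimensional real vector space and θ a linear endomorphism of V with θ^k = id and ker(θ − id) = 0. For ζ = (ζ₁, …, ζ_u) with each ζ_j ∈ {−1, 0, 1}, define f_ζ = (2/k) · Σ_{m=1}^{u} ( Σ_{j=1}^{u} ζ_j · sin(2πmj/k) ) · (θ^m − θ^{k−m}). Then: (a) f_ζ³ + f_ζ = 0 for every such ζ; (b) every f ∈ ℝ[θ] satisfying f³ + f = 0 equals f_ζ for some ζ ∈ {−1,0,1}^u; (c) if −1 is not an eigenvalue of θ and all ζ_j ∈ {−1, 1}, then f_ζ² = −id. -/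
/-- The canonical operator
f_ζ = (2/k) Σ_{m=1}^{u} ( Σ_{j=1}^{u} ζ_j sin(2πmj/k) ) (θ^m − θ^{k−m}). -/
noncomputable def fzeta {V : Type*} [AddCommGroup V] [Module ℝ V]
    (θ : Module.End ℝ V) (k u : ℕ) (ζ : ℕ → ℝ) : Module.End ℝ V :=
  (2 / (k : ℝ)) •
    ∑ m ∈ Finset.Icc 1 u,
      (∑ j ∈ Finset.Icc 1 u,
        ζ j * Real.sin (2 * Real.pi * (m : ℝ) * (j : ℝ) / (k : ℝ))) •
      (θ ^ m - θ ^ (k - m))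

namespace Stmt4Aux

open Polynomial Finset Complex

noncomputable def w (k : ℕ) : ℂ := Complex.exp (2 * Real.pi * Complex.I / k)

variable {k u : ℕ}

lemma w_prim (hk : k ≠ 0) : IsPrimitiveRoot (w k) k := Complex.isPrimitiveRoot_exp k hk

lemma w_ne (k : ℕ) : w k ≠ 0 := Complex.exp_ne_zero _

lemma w_zpow_one (hk : k ≠ 0) {c : ℤ} (h : (k:ℤ) ∣ c) : w k ^ c = 1 :=
  ((w_prim hk).zpow_eq_one_iff_dvd c).2 h

lemma geom (hk : k ≠ 0) (c : ℤ) :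
    ∑ m ∈ range k, (w k) ^ ((m : ℤ) * c) = if (k:ℤ) ∣ c then (k:ℂ) else 0 := by
  have hconv : ∀ m : ℕ, (w k) ^ ((m:ℤ) * c) = ((w k)^c)^m := by
    intro m; rw [mul_comm, zpow_mul, zpow_natCast]
  simp only [hconv]
  split_ifs with h
  · simp [w_zpow_one hk h]
  · have hne : (w k)^c ≠ 1 := fun hh => h (((w_prim hk).zpow_eq_one_iff_dvd c).1 hh)
    rw [geom_sum_eq hne]
    have h2 : ((w k)^c)^k = 1 := by
      rw [← zpow_natCast, ← zpow_mul, mul_comm, zpow_mul, zpow_natCast,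
        (w_prim hk).pow_eq_one, one_zpow]
    simp [h2]

lemma w_half (h : k = 2*u+2) : (w k)^(u+1) = -1 := by
  subst h
  rw [w, ← Complex.exp_nat_mul, ← Complex.exp_pi_mul_I]
  congr 1
  have h0 : ((2*u+2 : ℕ):ℂ) ≠ 0 := Nat.cast_ne_zero.2 (by omega)
  push_cast at h0 ⊢
  field_simp

lemma w_conj (hk : k ≠ 0) {l : ℕ} (hl : l ≤ k) :
    (w k)^(k-l) = (starRingEnd ℂ) ((w k)^l) := by
  have hconjw : (starRingEnd ℂ) (w k) = (w k)⁻¹ := by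
    rw [w, ← Complex.exp_conj]
    have harg : (starRingEnd ℂ) (2 * Real.pi * Complex.I / k)
        = -(2 * Real.pi * Complex.I / k) := by
      simp [map_div₀, Complex.conj_I, map_ofNat]
      ring
    rw [harg, Complex.exp_neg]
  have hmul : (w k)^(k-l) * (w k)^l = 1 := by
    rw [← pow_add, Nat.sub_add_cancel hl]
    exact (w_prim hk).pow_eq_one
  rw [map_pow, hconjw, inv_pow]
  exact eq_inv_of_mul_eq_one_left hmul

lemma range_split (hu : k = 2*u+1 ∨ k = 2*u+2) (g : ℕ → ℂ) :
    ∑ m ∈ range k, g m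
      = g 0 + (∑ m ∈ Icc 1 u, g m) + (if k = 2*u+2 then g (u+1) else 0)
        + ∑ m ∈ Icc 1 u, g (k - m) := by
  have hrefl : ∀ a : ℕ, a = k - u → u + a = k →
      ∑ m ∈ Finset.Ico a k, g m = ∑ m ∈ Icc 1 u, g (k - m) := by
    intro a ha1 ha2
    apply Finset.sum_nbij' (fun m => k - m) (fun m => k - m)
    · intro x hx; simp only [Finset.mem_Ico] at hx; simp only [Finset.mem_Icc]; omega
    · intro x hx; simp only [Finset.mem_Icc] at hx; simp only [Finset.mem_Ico]; omega
    · intro x hx; simp only [Finset.mem_Ico] at hx; omega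
    · intro x hx; simp only [Finset.mem_Icc] at hx; omega
    · intro x hx; simp only [Finset.mem_Ico] at hx; congr 1; omega
  rw [Finset.range_eq_Ico]
  rcases hu with h|h
  · have hne : ¬ (k = 2*u+2) := by omega
    rw [if_neg hne, add_zero]
    rw [← hrefl (u+1) (by omega) (by omega)]
    rw [← Finset.sum_Ico_consecutive g (by omega : (0:ℕ) ≤ u+1) (by omega : u+1 ≤ k)]
    rw [← Finset.sum_Ico_consecutive g (by omega : (0:ℕ) ≤ 1) (by omega : 1 ≤ u+1)]
    have e0 : ∑ m ∈ Finset.Ico 0 1, g m = g 0 := by simp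
    have e2 : Finset.Ico 1 (u+1) = Finset.Icc 1 u := rfl
    rw [e0, e2]
  · rw [if_pos h]
    rw [← hrefl (u+2) (by omega) (by omega)]
    rw [← Finset.sum_Ico_consecutive g (by omega : (0:ℕ) ≤ u+2) (by omega : u+2 ≤ k)]
    rw [← Finset.sum_Ico_consecutive g (by omega : (0:ℕ) ≤ u+1) (by omega : u+1 ≤ u+2)]
    rw [← Finset.sum_Ico_consecutive g (by omega : (0:ℕ) ≤ 1) (by omega : 1 ≤ u+1)]
    have e3 : ∑ m ∈ Finset.Ico (u+1) (u+2), g m = g (u+1) := by simp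
    have e0 : ∑ m ∈ Finset.Ico 0 1, g m = g 0 := by simp
    have e2 : Finset.Ico 1 (u+1) = Finset.Icc 1 u := rfl
    rw [e3, e0, e2]

lemma Tsum (hk : k ≠ 0) (hu : k = 2*u+1 ∨ k = 2*u+2) (c : ℤ) :
    ∑ m ∈ Icc 1 u, ((w k)^((m:ℤ)*c) + (w k)^(-((m:ℤ)*c)))
      = (if (k:ℤ) ∣ c then (k:ℂ) else 0) - 1 - (if k = 2*u+2 then (-1:ℂ)^c else 0) := by
  have hsplit := range_split hu (fun m => (w k)^((m:ℤ)*c))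
  rw [geom hk c] at hsplit
  have hg0 : (w k)^(((0:ℕ):ℤ)*c) = 1 := by norm_num
  have hgk : ∀ m ∈ Icc 1 u, (w k)^((((k - m : ℕ)):ℤ)*c) = (w k)^(-((m:ℤ)*c)) := by
    intro m hm
    simp only [Finset.mem_Icc] at hm
    have hmk : m ≤ k := by omega
    have : (((k - m : ℕ)):ℤ)*c = (k:ℤ)*c + (-((m:ℤ)*c)) := by
      push_cast [hmk]; ring
    rw [this, zpow_add₀ (w_ne k), w_zpow_one hk ⟨c, rfl⟩, one_mul]
  have hhalf : (if k = 2*u+2 then (w k)^(((u+1:ℕ):ℤ)*c) else 0)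
      = (if k = 2*u+2 then (-1:ℂ)^c else 0) := by
    split_ifs with h
    · rw [zpow_mul, zpow_natCast, w_half h]
    · rfl
  rw [Finset.sum_congr rfl hgk, hg0, hhalf] at hsplit
  rw [Finset.sum_add_distrib]
  linear_combination -hsplit

lemma sprod (k : ℕ) (a b : ℤ) :
    ((w k)^a - (w k)^(-a)) * ((w k)^b - (w k)^(-b))
      = ((w k)^(a+b) + (w k)^(-(a+b))) - ((w k)^(a-b) + (w k)^(-(a-b))) := by
  have hw := w_ne k
  simp only [zpow_add₀ hw, zpow_sub₀ hw, zpow_neg]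
  field_simp
  ring

lemma innerS (hk : k ≠ 0) (hu : k = 2*u+1 ∨ k = 2*u+2) (j l : ℕ) :
    ∑ m ∈ Icc 1 u, ((w k)^((m:ℤ)*j) - (w k)^(-((m:ℤ)*j))) * ((w k)^((m:ℤ)*l) - (w k)^(-((m:ℤ)*l)))
      = (if (k:ℤ) ∣ ((j:ℤ)+l) then (k:ℂ) else 0) - (if (k:ℤ) ∣ ((j:ℤ)-l) then (k:ℂ) else 0) := by
  have hexp : ∀ m ∈ Icc 1 u,
      ((w k)^((m:ℤ)*j) - (w k)^(-((m:ℤ)*j))) * ((w k)^((m:ℤ)*l) - (w k)^(-((m:ℤ)*l)))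
        = ((w k)^((m:ℤ)*((j:ℤ)+l)) + (w k)^(-((m:ℤ)*((j:ℤ)+l))))
          - ((w k)^((m:ℤ)*((j:ℤ)-l)) + (w k)^(-((m:ℤ)*((j:ℤ)-l)))) := by
    intro m _
    rw [sprod k]
    have e1 : (m:ℤ)*j + m*l = (m:ℤ)*((j:ℤ)+l) := by ring
    have e2 : (m:ℤ)*j - m*l = (m:ℤ)*((j:ℤ)-l) := by ring
    rw [e1, e2]
  rw [Finset.sum_congr rfl hexp, Finset.sum_sub_distrib, Tsum hk hu, Tsum hk hu]
  have hpar : (if k = 2*u+2 then (-1:ℂ)^((j:ℤ)+l) else 0)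
      = (if k = 2*u+2 then (-1:ℂ)^((j:ℤ)-l) else 0) := by
    split_ifs with h
    · have e3 : (j:ℤ)+l = ((j:ℤ)-l) + 2*l := by ring
      rw [e3, zpow_add₀ (by norm_num : (-1:ℂ) ≠ 0), zpow_mul]
      norm_num
    · rfl
  rw [hpar]
  ring

noncomputable def Ppoly (k u : ℕ) (ζ : ℕ → ℝ) : ℝ[X] :=
  (2 / (k : ℝ)) •
    ∑ m ∈ Finset.Icc 1 u,
      (∑ j ∈ Finset.Icc 1 u,
        ζ j * Real.sin (2 * Real.pi * (m : ℝ) * (j : ℝ) / (k : ℝ))) •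
      ((X:ℝ[X]) ^ m - (X:ℝ[X]) ^ (k - m))

lemma aeval_Ppoly {V : Type*} [AddCommGroup V] [Module ℝ V]
    (θ : Module.End ℝ V) (ζ : ℕ → ℝ) :
    Polynomial.aeval θ (Ppoly k u ζ) = fzeta θ k u ζ := by
  simp [Ppoly, fzeta, map_sum, map_sub, map_pow]

lemma sin_eq (k : ℕ) (m j : ℕ) :
    Complex.sin (2 * (Real.pi:ℂ) * (m : ℂ) * (j : ℂ) / (k : ℂ))
      = -(Complex.I/2) * ((w k)^((m:ℤ)*j) - (w k)^(-((m:ℤ)*j))) := by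
  have harg : (2 * (Real.pi:ℂ) * (m : ℂ) * (j : ℂ) / (k : ℂ))
      = ((2 * Real.pi * (m:ℝ) * (j:ℝ) / (k:ℝ) : ℝ) : ℂ) := by push_cast; ring
  rw [harg, ← Complex.ofReal_sin]
  have e1 : (w k)^((m:ℤ)*j) = Complex.exp (((2 * Real.pi * (m : ℝ) * (j : ℝ) / (k : ℝ) : ℝ):ℂ) * Complex.I) := by
    have e0 : (m:ℤ)*j = ((m*j : ℕ):ℤ) := by push_cast; ring
    rw [e0, zpow_natCast, w, ← Complex.exp_nat_mul]
    congr 1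
    push_cast
    ring
  have e2 : (w k)^(-((m:ℤ)*j)) = Complex.exp (-(((2 * Real.pi * (m : ℝ) * (j : ℝ) / (k : ℝ) : ℝ):ℂ) * Complex.I)) := by
    rw [zpow_neg, e1, ← Complex.exp_neg]
  rw [e1, e2, Complex.ofReal_sin]
  show Complex.sin _ = _
  rw [Complex.sin]
  ring_nf

lemma dvd_window {k x : ℕ} (h : k ∣ x) (h1 : 0 < x) (h2 : x < 2*k) : x = k := by
  obtain ⟨t, rfl⟩ := h
  have ht1 : 1 ≤ t := by by_contra hc; push_neg at hc; interval_cases t <;> omega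
  have ht2 : t < 2 := by by_contra hc; push_neg at hc; nlinarith
  interval_cases t; omega

lemma dvd_plus_iff {j l : ℕ} (hku : u < k) (hj : j ∈ Icc 1 u) (hl : l < k) :
    (k:ℤ) ∣ ((j:ℤ)+l) ↔ j = k - l := by
  simp only [Finset.mem_Icc] at hj
  have e0 : (j:ℤ)+l = ((j+l : ℕ):ℤ) := by push_cast; ring
  rw [e0, Int.natCast_dvd_natCast]
  constructor
  · intro h
    have := dvd_window h (by omega) (by omega)
    omega
  · intro h
    have e1 : j + l = k := by omega
    rw [e1]

lemma dvd_minus_iff {j l : ℕ} (hku : u < k) (hj : j ∈ Icc 1 u) (hl : l < k) :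
    (k:ℤ) ∣ ((j:ℤ)-l) ↔ j = l := by
  simp only [Finset.mem_Icc] at hj
  constructor
  · intro h
    have h0 : (j:ℤ) - l = 0 := Int.eq_zero_of_abs_lt_dvd h (by rw [abs_lt]; omega)
    omega
  · rintro rfl; simp

lemma aeval_Ppoly_w (hk2 : 2 ≤ k) (hu : k = 2*u+1 ∨ k = 2*u+2) (ζ : ℕ → ℝ) (l : ℕ) (hl : l < k) :
    Polynomial.aeval ((w k)^l) (Ppoly k u ζ)
      = Complex.I * ((if l ∈ Icc 1 u then (ζ l : ℂ) else 0)
          - (if k - l ∈ Icc 1 u then (ζ (k-l) : ℂ) else 0)) := by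
  have hk0 : k ≠ 0 := by omega
  have hku : u < k := by omega
  simp only [Ppoly, map_smul, map_sum, map_sub, map_pow, aeval_X]
  have hpow1 : ∀ m ∈ Icc 1 u, ((w k)^l)^m = (w k)^((m:ℤ)*l) := by
    intro m _
    rw [← pow_mul, ← zpow_natCast]
    congr 1
    push_cast
    ring
  have hpow2 : ∀ m ∈ Icc 1 u, ((w k)^l)^(k-m) = (w k)^(-((m:ℤ)*l)) := by
    intro m hm
    simp only [Finset.mem_Icc] at hm
    rw [← pow_mul, ← zpow_natCast]
    have hc : ((l*(k-m) : ℕ):ℤ) = (k:ℤ)*l + (-((m:ℤ)*l)) := by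
      push_cast [show m ≤ k by omega]
      ring
    rw [hc, zpow_add₀ (w_ne k), w_zpow_one hk0 ⟨l, rfl⟩, one_mul]
  rw [Finset.sum_congr rfl (fun m hm => by rw [hpow1 m hm, hpow2 m hm])]
  have hsin : ∀ m ∈ Icc 1 u,
      ((∑ j ∈ Icc 1 u, ζ j * Real.sin (2*Real.pi*(m:ℝ)*(j:ℝ)/(k:ℝ)) : ℝ))
        • ((w k)^((m:ℤ)*l) - (w k)^(-((m:ℤ)*l)))
      = ∑ j ∈ Icc 1 u, (ζ j : ℂ) * (-(Complex.I/2)) *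
          (((w k)^((m:ℤ)*j) - (w k)^(-((m:ℤ)*j))) * ((w k)^((m:ℤ)*l) - (w k)^(-((m:ℤ)*l)))) := by
    intro m _
    rw [Complex.real_smul]
    push_cast
    rw [Finset.sum_mul]
    apply Finset.sum_congr rfl
    intro j _
    rw [sin_eq k m j]
    ring
  rw [Finset.sum_congr rfl hsin, Finset.sum_comm]
  have hinner : ∀ j ∈ Icc 1 u,
      ∑ m ∈ Icc 1 u, (ζ j : ℂ) * (-(Complex.I/2)) *
          (((w k)^((m:ℤ)*j) - (w k)^(-((m:ℤ)*j))) * ((w k)^((m:ℤ)*l) - (w k)^(-((m:ℤ)*l))))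
      = (if j = k - l then (ζ j : ℂ) * (-(Complex.I/2)) * k else 0)
        - (if j = l then (ζ j : ℂ) * (-(Complex.I/2)) * k else 0) := by
    intro j hj
    rw [← Finset.mul_sum, innerS hk0 hu j l]
    simp only [dvd_plus_iff hku hj hl, dvd_minus_iff hku hj hl]
    split_ifs <;> ring
  rw [Finset.sum_congr rfl hinner, Finset.sum_sub_distrib,
    Finset.sum_ite_eq' (Icc 1 u) (k-l) (fun j => (ζ j : ℂ) * (-(Complex.I/2)) * k),
    Finset.sum_ite_eq' (Icc 1 u) l (fun j => (ζ j : ℂ) * (-(Complex.I/2)) * k)]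
  have hkc : ((k:ℕ):ℂ) ≠ 0 := Nat.cast_ne_zero.2 hk0
  rw [Complex.real_smul]
  push_cast
  split_ifs <;> field_simp [hkc] <;> ring

lemma pv_cases (z : ℂ) (h : z^3 + z = 0) : z = 0 ∨ z = Complex.I ∨ z = -Complex.I := by
  have h2 : z * (z - Complex.I) * (z + Complex.I) = 0 := by
    linear_combination h - z * Complex.I_sq
  rcases mul_eq_zero.1 h2 with h3 | h3
  · rcases mul_eq_zero.1 h3 with h4 | h4
    · exact Or.inl h4
    · exact Or.inr (Or.inl (sub_eq_zero.1 h4))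
  · exact Or.inr (Or.inr (eq_neg_of_add_eq_zero_left h3))

lemma aeval_real (q : Polynomial ℝ) (r : ℝ) :
    Polynomial.aeval ((r:ℝ):ℂ) q = ((q.eval r : ℝ) : ℂ) := by
  rw [Polynomial.aeval_def]
  exact Polynomial.eval₂_at_apply (algebraMap ℝ ℂ) r

lemma minpoly_dvd_of_roots {V : Type*} [AddCommGroup V] [Module ℝ V] [FiniteDimensional ℝ V]
    (hk : k ≠ 0) {θ : Module.End ℝ V} (hθk : θ ^ k = 1) (q : Polynomial ℝ)
    (hq : ∀ l < k, (Polynomial.aeval ((w k)^l) (minpoly ℝ θ) = 0) →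
      Polynomial.aeval ((w k)^l) q = 0) :
    minpoly ℝ θ ∣ q := by
  classical
  by_cases hq0 : q = 0
  · simp [hq0]
  haveI : NeZero k := ⟨hk⟩
  set μ := minpoly ℝ θ with hμ
  have hint : IsIntegral ℝ θ := Algebra.IsIntegral.isIntegral θ
  have hmonic : μ.Monic := minpoly.monic hint
  have hdvd : μ ∣ (X^k - C 1) := minpoly.dvd ℝ θ (by simp [hθk])
  set μc := μ.map (algebraMap ℝ ℂ) with hμc
  set qc := q.map (algebraMap ℝ ℂ) with hqc
  have hdvdc : μc ∣ (X^k - C 1 : Polynomial ℂ) := by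
    have h2 := Polynomial.map_dvd (algebraMap ℝ ℂ) hdvd
    simpa using h2
  have hsep : (X^k - C 1 : Polynomial ℂ).Separable :=
    Polynomial.separable_X_pow_sub_C 1 (Nat.cast_ne_zero.2 hk) one_ne_zero
  have hsepμ : μc.Separable := hsep.of_dvd hdvdc
  have hnodup := Polynomial.nodup_roots hsepμ
  have hsplit : μc = (Multiset.map (fun a => X - C a) μc.roots).prod :=
    (IsAlgClosed.splits μc).eq_prod_roots_of_monic (hmonic.map _)
  have hqc0 : qc ≠ 0 := fun h =>
    hq0 (Polynomial.map_injective _ (algebraMap ℝ ℂ).injective (by rw [Polynomial.map_zero]; exact h))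
  have hsub : μc.roots ⊆ qc.roots := by
    intro r hr
    have hrr : μc.IsRoot r := Polynomial.isRoot_of_mem_roots hr
    have hrk : r^k = 1 := by
      have h3 : (X^k - C 1 : Polynomial ℂ).IsRoot r := hrr.dvd hdvdc
      have h4 := h3
      simp only [IsRoot, eval_sub, eval_pow, eval_X, eval_C, sub_eq_zero] at h4
      exact h4
    obtain ⟨l, hlk, hlr⟩ := (w_prim hk).eq_pow_of_pow_eq_one hrk
    subst hlr
    have h5 : Polynomial.aeval ((w k)^l) μ = 0 := by
      rw [Polynomial.aeval_def, ← Polynomial.eval_map]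
      exact hrr
    have h6 := hq l hlk h5
    rw [Polynomial.mem_roots']
    refine ⟨hqc0, ?_⟩
    rw [IsRoot, Polynomial.eval_map, ← Polynomial.aeval_def]
    exact h6
  have hle : μc.roots ≤ qc.roots := (Multiset.le_iff_subset hnodup).2 hsub
  have hdvd2 : μc ∣ qc := by
    rw [hsplit]
    exact (Multiset.prod_dvd_prod_of_le (Multiset.map_le_map hle)).trans
      (Polynomial.prod_multiset_X_sub_C_dvd qc)
  have hmod : q %ₘ μ = 0 := by
    apply Polynomial.map_injective _ (algebraMap ℝ ℂ).injective
    rw [Polynomial.map_modByMonic _ hmonic]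
    simpa using (Polynomial.modByMonic_eq_zero_iff_dvd (hmonic.map _)).2 hdvd2
  exact (Polynomial.modByMonic_eq_zero_iff_dvd hmonic).1 hmod

end Stmt4Aux

open Stmt4Aux Polynomial Finset Complex in
/-- Explicit description of all canonical f-structures on a homogeneous
Φ-space of order k: (a) every f_ζ with ζ_j ∈ {−1,0,1} satisfies f³ + f = 0;
(b) every polynomial in θ satisfying f³ + f = 0 is of the form f_ζ;
(c) if −1 is not an eigenvalue of θ and all ζ_j ∈ {−1,1}, then f_ζ² = −id. -/
theorem stmt_4 (V : Type*) [AddCommGroup V] [Module ℝ V] [FiniteDimensional ℝ V]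
    (k u : ℕ) (hk : 2 ≤ k) (hu : k = 2 * u + 1 ∨ k = 2 * u + 2)
    (θ : Module.End ℝ V) (hθk : θ ^ k = 1) (hθ : LinearMap.ker (θ - 1) = ⊥) :
    -- (a)
    (∀ ζ : ℕ → ℝ, (∀ j ∈ Finset.Icc 1 u, ζ j = -1 ∨ ζ j = 0 ∨ ζ j = 1) →
      (fzeta θ k u ζ) ^ 3 + fzeta θ k u ζ = 0) ∧
    -- (b)
    (∀ f : Module.End ℝ V, (∃ p : Polynomial ℝ, f = Polynomial.aeval θ p) →
      f ^ 3 + f = 0 →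
      ∃ ζ : ℕ → ℝ, (∀ j ∈ Finset.Icc 1 u, ζ j = -1 ∨ ζ j = 0 ∨ ζ j = 1) ∧
        f = fzeta θ k u ζ) ∧
    -- (c)
    (¬ Module.End.HasEigenvalue θ (-1) →
      ∀ ζ : ℕ → ℝ, (∀ j ∈ Finset.Icc 1 u, ζ j = -1 ∨ ζ j = 1) →
        (fzeta θ k u ζ) ^ 2 = -1) := by
  classical
  have hk0 : k ≠ 0 := by omega
  have hku : u < k := by omega
  set μ := minpoly ℝ θ with hμdef
  -- 1 is not a root of μ over ℂ
  have heig1 : ¬ (Polynomial.aeval ((1:ℂ)) μ = 0) := by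
    intro h
    have h1 : μ.eval 1 = 0 := by
      have h2 : Polynomial.aeval (((1:ℝ)):ℂ) μ = ((μ.eval 1 : ℝ):ℂ) := aeval_real μ 1
      rw [show (((1:ℝ)):ℂ) = (1:ℂ) by norm_num, h] at h2
      exact_mod_cast h2.symm
    have h3 : θ.HasEigenvalue 1 := Module.End.hasEigenvalue_of_isRoot h1
    rw [Module.End.hasEigenvalue_iff, Module.End.eigenspace_def, one_smul] at h3
    exact h3 hθ
  refine ⟨?_, ?_, ?_⟩
  -- (a)
  · intro ζ hζ
    have key : μ ∣ ((Ppoly k u ζ)^3 + Ppoly k u ζ) := by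
      apply minpoly_dvd_of_roots hk0 hθk
      intro l hl _
      rw [map_add, map_pow, aeval_Ppoly_w hk hu ζ l hl]
      by_cases h1 : l ∈ Finset.Icc 1 u
      · have h2 : k - l ∉ Finset.Icc 1 u := by
          simp only [Finset.mem_Icc] at h1 ⊢; omega
        rw [if_pos h1, if_neg h2]
        have hc3 : ((ζ l : ℂ))^3 = (ζ l : ℂ) := by
          rcases hζ l h1 with h|h|h <;> rw [h] <;> norm_num
        linear_combination Complex.I * ((ζ l:ℂ))^3 * Complex.I_sq - Complex.I * hc3
      · by_cases h2 : k - l ∈ Finset.Icc 1 u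
        · rw [if_neg h1, if_pos h2]
          have hc3 : ((ζ (k-l) : ℂ))^3 = (ζ (k-l) : ℂ) := by
            rcases hζ (k-l) h2 with h|h|h <;> rw [h] <;> norm_num
          linear_combination - Complex.I * ((ζ (k-l):ℂ))^3 * Complex.I_sq + Complex.I * hc3
        · rw [if_neg h1, if_neg h2]; norm_num
    obtain ⟨c, hc⟩ := key
    have h0 : Polynomial.aeval θ ((Ppoly k u ζ)^3 + Ppoly k u ζ) = 0 := by
      rw [hc, map_mul]
      rw [hμdef] at *
      rw [minpoly.aeval, zero_mul]
    rw [map_add, map_pow, aeval_Ppoly θ ζ] at h0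
    exact h0
  -- (b)
  · rintro f ⟨p, hf⟩ hcube
    have hdvd3 : μ ∣ (p^3 + p) := by
      apply minpoly.dvd
      rw [map_add, map_pow, ← hf]
      exact hcube
    have hp3 : ∀ z : ℂ, Polynomial.aeval z μ = 0 →
        (Polynomial.aeval z p)^3 + Polynomial.aeval z p = 0 := by
      intro z hz
      obtain ⟨c, hc⟩ := hdvd3
      have h2 := congrArg (Polynomial.aeval z) hc
      rw [map_add, map_pow, map_mul, hz, zero_mul] at h2
      exact h2
    set ζ : ℕ → ℝ := fun j =>
      if Polynomial.aeval ((w k)^j) μ = 0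
      then (-Complex.I * Polynomial.aeval ((w k)^j) p).re else 0 with hζdef
    have hζval : ∀ j ∈ Finset.Icc 1 u, ζ j = -1 ∨ ζ j = 0 ∨ ζ j = 1 := by
      intro j _
      rw [hζdef]
      simp only
      split_ifs with hr
      · rcases pv_cases _ (hp3 _ hr) with h|h|h <;> rw [h] <;>
          simp [Complex.I_mul_I]
      · simp
    refine ⟨ζ, hζval, ?_⟩
    have key : μ ∣ (p - Ppoly k u ζ) := by
      apply minpoly_dvd_of_roots hk0 hθk
      intro l hl hroot
      rw [map_sub, aeval_Ppoly_w hk hu ζ l hl]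
      by_cases h1 : l ∈ Finset.Icc 1 u
      · have h2 : k - l ∉ Finset.Icc 1 u := by
          simp only [Finset.mem_Icc] at h1 ⊢; omega
        rw [if_pos h1, if_neg h2]
        have hζl : ζ l = (-Complex.I * Polynomial.aeval ((w k)^l) p).re := by
          rw [hζdef]; simp only; rw [if_pos hroot]
        rw [hζl]
        rcases pv_cases _ (hp3 _ hroot) with h|h|h <;> rw [h] <;>
          simp [Complex.I_mul_I]
      · by_cases h2 : k - l ∈ Finset.Icc 1 u
        · rw [if_neg h1, if_pos h2]
          have hconj : (w k)^(k-l) = (starRingEnd ℂ) ((w k)^l) :=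
            w_conj hk0 (le_of_lt hl)
          have hrootj : Polynomial.aeval ((w k)^(k-l)) μ = 0 := by
            rw [hconj, Polynomial.aeval_conj, hroot, map_zero]
          have hζj : ζ (k-l) = (-Complex.I * Polynomial.aeval ((w k)^(k-l)) p).re := by
            rw [hζdef]; simp only; rw [if_pos hrootj]
          rw [hζj, hconj, Polynomial.aeval_conj]
          rcases pv_cases _ (hp3 _ hroot) with h|h|h <;> rw [h] <;>
            simp [Complex.I_mul_I]
        · rw [if_neg h1, if_neg h2]
          simp only [Finset.mem_Icc] at h1 h2
          rcases Nat.eq_zero_or_pos l with rfl | hlpos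
          · rw [pow_zero] at hroot
            exact absurd hroot heig1
          · have hleq : k = 2*u+2 ∧ l = u+1 := by omega
            obtain ⟨hk2u, rfl⟩ := hleq
            have hw1 : (w k)^(u+1) = (((-1:ℝ)):ℂ) := by
              rw [w_half hk2u]; norm_num
            rw [hw1]
            have hpr : Polynomial.aeval (((-1:ℝ)):ℂ) p = ((p.eval (-1) : ℝ) : ℂ) :=
              aeval_real p (-1)
            have hroot2 : Polynomial.aeval (((-1:ℝ)):ℂ) μ = 0 := by rw [← hw1]; exact hroot
            have hx : (p.eval (-1))^3 + p.eval (-1) = 0 := by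
              have h3 := hp3 _ hroot2
              rw [hpr] at h3
              exact_mod_cast h3
            have hx0 : p.eval (-1) = 0 := by nlinarith [sq_nonneg (p.eval (-1))]
            rw [hpr, hx0]
            simp
    obtain ⟨c, hc⟩ := key
    have h0 : Polynomial.aeval θ (p - Ppoly k u ζ) = 0 := by
      rw [hc, map_mul]
      rw [hμdef] at *
      rw [minpoly.aeval, zero_mul]
    rw [map_sub, sub_eq_zero, aeval_Ppoly] at h0
    rw [hf, h0]
  -- (c)
  · intro hneg ζ hζ
    have key : μ ∣ ((Ppoly k u ζ)^2 + 1) := by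
      apply minpoly_dvd_of_roots hk0 hθk
      intro l hl hroot
      rw [map_add, map_pow, map_one, aeval_Ppoly_w hk hu ζ l hl]
      by_cases h1 : l ∈ Finset.Icc 1 u
      · have h2 : k - l ∉ Finset.Icc 1 u := by
          simp only [Finset.mem_Icc] at h1 ⊢; omega
        rw [if_pos h1, if_neg h2]
        have hc2 : ((ζ l : ℂ))^2 = 1 := by
          rcases hζ l h1 with h|h <;> rw [h] <;> norm_num
        linear_combination ((ζ l:ℂ))^2 * Complex.I_sq - hc2
      · by_cases h2 : k - l ∈ Finset.Icc 1 u
        · rw [if_neg h1, if_pos h2]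
          have hc2 : ((ζ (k-l) : ℂ))^2 = 1 := by
            rcases hζ (k-l) h2 with h|h <;> rw [h] <;> norm_num
          linear_combination ((ζ (k-l):ℂ))^2 * Complex.I_sq - hc2
        · simp only [Finset.mem_Icc] at h1 h2
          rcases Nat.eq_zero_or_pos l with rfl | hlpos
          · rw [pow_zero] at hroot
            exact absurd hroot heig1
          · have hleq : k = 2*u+2 ∧ l = u+1 := by omega
            obtain ⟨hk2u, rfl⟩ := hleq
            have hw1 : (w k)^(u+1) = (((-1:ℝ)):ℂ) := by
              rw [w_half hk2u]; norm_num
            rw [hw1] at hroot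
            have h1 : μ.eval (-1) = 0 := by
              have h2 := aeval_real μ (-1)
              rw [hroot] at h2
              exact_mod_cast h2.symm
            exact absurd (Module.End.hasEigenvalue_of_isRoot h1) hneg
    obtain ⟨c, hc⟩ := key
    have h0 : Polynomial.aeval θ ((Ppoly k u ζ)^2 + 1) = 0 := by
      rw [hc, map_mul]
      rw [hμdef] at *
      rw [minpoly.aeval, zero_mul]
    rw [map_add, map_pow, map_one, aeval_Ppoly] at h0
    exact eq_neg_of_add_eq_zero_left h0
end

section
/- Let V be a finite-dimensional real vector space and θ a linear endomorphism with θ³ = id and ker(θ − id) = 0. Then J := (1/√3)(θ − θ²) satisfies J² = −id. Moreover, {F ∈ ℝ[θ] : F² = −id} = {J, −J} and {P ∈ ℝ[θ] : P² = id} = {id, −id}; that is, up to sign, J and the identity are the only canonical almost complex structures and canonical almost product structures on a homogeneous 3-symmetric space. -/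
open Polynomial

/-- On a homogeneous 3-symmetric space (θ³ = id, 1 not an eigenvalue of θ),
J = (1/√3)(θ − θ²) satisfies J² = −id; up to sign, J is the only canonical
almost complex structure and the identity is the only canonical almost
product structure. -/
theorem stmt_5 (V : Type*) [AddCommGroup V] [Module ℝ V] [FiniteDimensional ℝ V]
    (θ : Module.End ℝ V) (hθ3 : θ ^ 3 = 1) (hθ : LinearMap.ker (θ - 1) = ⊥)
    (J : Module.End ℝ V) (hJ : J = (1 / Real.sqrt 3) • (θ - θ ^ 2)) :
    J ^ 2 = -1 ∧
    {F : Module.End ℝ V | (∃ p : Polynomial ℝ, F = Polynomial.aeval θ p) ∧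
      F ^ 2 = -1} = {J, -J} ∧
    {P : Module.End ℝ V | (∃ p : Polynomial ℝ, P = Polynomial.aeval θ p) ∧
      P ^ 2 = 1} = {1, -1} := by
  set c : ℝ := 1 / Real.sqrt 3 with hc
  have hker := LinearMap.ker_eq_bot.mp hθ
  have hfac : (θ - 1) * (θ ^ 2 + θ + 1) = 0 := by
    have h : (θ - 1) * (θ ^ 2 + θ + 1) = θ ^ 3 - 1 := by noncomm_ring
    rw [h, hθ3, sub_self]
  have hq : θ ^ 2 + θ + 1 = 0 := by
    ext v
    have h1 : (θ - 1) ((θ ^ 2 + θ + 1 : Module.End ℝ V) v) = (θ - 1) 0 := by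
      rw [map_zero]
      have := congrArg (fun f : Module.End ℝ V => f v) hfac
      simpa using this
    simpa using hker h1
  have h2 : θ ^ 2 = -θ - 1 := by
    have : θ ^ 2 = θ ^ 2 + θ + 1 - (θ + 1) := by abel
    rw [this, hq]; abel
  have sqf : ∀ a b : ℝ, (a • (1 : Module.End ℝ V) + b • θ) ^ 2
      = (a ^ 2 - b ^ 2) • 1 + (2 * a * b - b ^ 2) • θ := by
    intro a b
    have hmul : θ * θ = θ ^ 2 := (sq θ).symm
    rw [sq, add_mul, mul_add, mul_add]
    simp only [smul_mul_assoc, mul_smul_comm, smul_smul, one_mul, mul_one, hmul, h2]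
    module
  have hc2 : c ^ 2 = 1 / 3 := by
    rw [hc, div_pow, one_pow, Real.sq_sqrt (by norm_num : (3:ℝ) ≥ 0)]
  have hJ' : J = c • (1 : Module.End ℝ V) + (2 * c) • θ := by
    rw [hJ, h2]; module
  have hJsq : J ^ 2 = -1 := by
    rw [hJ', sqf]
    rw [show c ^ 2 - (2 * c) ^ 2 = -1 by nlinarith [hc2],
        show 2 * c * (2 * c) - (2 * c) ^ 2 = 0 by ring]
    simp
  -- key: every element of ℝ[θ] is a + bθ
  have hm : (X ^ 2 + X + 1 : ℝ[X]).Monic := by monicity!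
  have hdeg : (X ^ 2 + X + 1 : ℝ[X]).degree = 2 := by compute_degree!
  have haevm : aeval θ (X ^ 2 + X + 1 : ℝ[X]) = 0 := by
    simpa using hq
  have key : ∀ F : Module.End ℝ V, (∃ p : ℝ[X], F = aeval θ p) →
      ∃ a b : ℝ, F = a • (1 : Module.End ℝ V) + b • θ := by
    rintro F ⟨p, rfl⟩
    set r := p %ₘ (X ^ 2 + X + 1) with hr
    have h3 : aeval θ p = aeval θ r := by
      conv_lhs => rw [← Polynomial.modByMonic_add_div p (X ^ 2 + X + 1)]
      rw [map_add, map_mul, haevm, zero_mul, add_zero]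
    have hdr : r.degree ≤ 1 := by
      have := Polynomial.degree_modByMonic_lt p hm
      rw [hdeg] at this
      exact Order.le_of_lt_succ (by exact_mod_cast this)
    have h4 : r = C (r.coeff 1) * X + C (r.coeff 0) :=
      Polynomial.eq_X_add_C_of_degree_le_one hdr
    refine ⟨r.coeff 0, r.coeff 1, ?_⟩
    rw [h3]
    conv_lhs => rw [h4]
    simp only [map_add, map_mul, aeval_X, aeval_C, Algebra.algebraMap_eq_smul_one,
      smul_mul_assoc, one_mul]
    abel
  have hscalar : Nontrivial V → ∀ a b : ℝ,
      a • (1 : Module.End ℝ V) + b • θ = 0 → a = 0 ∧ b = 0 := by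
    intro hV a b hab
    obtain ⟨v, hv⟩ := exists_ne (0 : V)
    by_cases hb : b = 0
    · subst hb
      have h1 : a • v = 0 := by
        have := congrArg (fun f : Module.End ℝ V => f v) (by simpa using hab :
          a • (1 : Module.End ℝ V) = 0)
        simpa using this
      rcases smul_eq_zero.mp h1 with h | h
      · exact ⟨h, rfl⟩
      · exact absurd h hv
    · exfalso
      have h1 : b • θ = -(a • (1 : Module.End ℝ V)) := eq_neg_of_add_eq_zero_right hab
      have hθeq : θ = (-(a / b)) • (1 : Module.End ℝ V) := by
        calc θ = b⁻¹ • (b • θ) := (inv_smul_smul₀ hb θ).symm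
          _ = b⁻¹ • (-(a • (1 : Module.End ℝ V))) := by rw [h1]
          _ = (-(a / b)) • (1 : Module.End ℝ V) := by
              rw [smul_neg, smul_smul, ← neg_smul]
              congr 1
              field_simp
      set t : ℝ := -(a / b) with htd
      have ht3 : t ^ 3 = 1 := by
        have hp1 : (t ^ 3) • (1 : Module.End ℝ V) = 1 := by
          rw [show (t ^ 3) • (1 : Module.End ℝ V) = (t • 1) ^ 3 from by
            rw [_root_.smul_pow, one_pow], ← hθeq, hθ3]
        have hp2 : (t ^ 3) • v = v := by
          have := congrArg (fun f : Module.End ℝ V => f v) hp1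
          simpa using this
        have hp3 : (t ^ 3 - 1) • v = 0 := by
          rw [sub_smul, one_smul, hp2, sub_self]
        rcases smul_eq_zero.mp hp3 with h | h
        · linarith [sub_eq_zero.mp (by linarith [h] : t ^ 3 - 1 = 0)]
        · exact absurd h hv
      have htpos : t ^ 2 + t + 1 > 0 := by nlinarith [sq_nonneg (2 * t + 1)]
      have ht1 : t = 1 := by
        have hf : (t - 1) * (t ^ 2 + t + 1) = 0 := by linear_combination ht3
        rcases mul_eq_zero.mp hf with h | h
        · linarith [sub_eq_zero.mp h]
        · linarith
      have hθ1 : θ - 1 = 0 := by rw [hθeq, ht1, one_smul, sub_self]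
      rw [hθ1] at hθ
      have hvv : v ∈ LinearMap.ker (0 : Module.End ℝ V) := by simp
      rw [hθ] at hvv
      exact hv (by simpa using hvv)
  refine ⟨hJsq, ?_, ?_⟩
  · -- almost complex structures
    ext F
    simp only [Set.mem_setOf_eq, Set.mem_insert_iff, Set.mem_singleton_iff]
    constructor
    · rintro ⟨hp, hF2⟩
      rcases subsingleton_or_nontrivial V with hV | hV
      · haveI : Subsingleton (Module.End ℝ V) :=
          ⟨fun f g => LinearMap.ext fun v => Subsingleton.elim _ _⟩
        left; exact Subsingleton.elim _ _
      · obtain ⟨a, b, hab⟩ := key F hp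
        rw [hab, sqf] at hF2
        have h0 : (a ^ 2 - b ^ 2 + 1) • (1 : Module.End ℝ V) + (2 * a * b - b ^ 2) • θ = 0 := by
          rw [add_smul, one_smul, add_right_comm, hF2]
          simp
        obtain ⟨e1, e2⟩ := hscalar hV _ _ h0
        have hb : b = 0 ∨ b = 2 * a := by
          rcases mul_eq_zero.mp (show b * (2 * a - b) = 0 by linear_combination e2) with h | h
          · exact Or.inl h
          · exact Or.inr (by linarith)
        rcases hb with hb | hb
        · exfalso; rw [hb] at e1; nlinarith
        · subst hb
          have hs3 : (0:ℝ) < Real.sqrt 3 := Real.sqrt_pos.mpr (by norm_num)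
          have h3 : Real.sqrt 3 ^ 2 = 3 := Real.sq_sqrt (by norm_num)
          have hsa : (Real.sqrt 3 * a - 1) * (Real.sqrt 3 * a + 1) = 0 := by nlinarith
          rcases mul_eq_zero.mp hsa with h | h
          · left
            have ha : a = c := by rw [hc]; field_simp; linarith
            rw [hab, hJ', ha]
          · right
            have ha : a = -c := by rw [hc]; field_simp; linarith
            rw [hab, hJ', ha]
            module
    · have hmem : ∃ p : ℝ[X], J = aeval θ p := by
        refine ⟨C c * (X - X ^ 2), ?_⟩
        rw [map_mul, aeval_C, ← Algebra.smul_def, hJ]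
        simp
      rintro (rfl | rfl)
      · exact ⟨hmem, hJsq⟩
      · obtain ⟨p, hp⟩ := hmem
        exact ⟨⟨-p, by rw [map_neg, ← hp]⟩, by rw [neg_sq]; exact hJsq⟩
  · -- almost product structures
    ext P
    simp only [Set.mem_setOf_eq, Set.mem_insert_iff, Set.mem_singleton_iff]
    constructor
    · rintro ⟨hp, hP2⟩
      rcases subsingleton_or_nontrivial V with hV | hV
      · haveI : Subsingleton (Module.End ℝ V) :=
          ⟨fun f g => LinearMap.ext fun v => Subsingleton.elim _ _⟩
        left; exact Subsingleton.elim _ _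
      · obtain ⟨a, b, hab⟩ := key P hp
        rw [hab, sqf] at hP2
        have h0 : (a ^ 2 - b ^ 2 - 1) • (1 : Module.End ℝ V) + (2 * a * b - b ^ 2) • θ = 0 := by
          rw [sub_smul, one_smul, sub_add_eq_add_sub, hP2]
          simp
        obtain ⟨e1, e2⟩ := hscalar hV _ _ h0
        have hb : b = 0 ∨ b = 2 * a := by
          rcases mul_eq_zero.mp (show b * (2 * a - b) = 0 by linear_combination e2) with h | h
          · exact Or.inl h
          · exact Or.inr (by linarith)
        rcases hb with hb | hb
        · subst hb
          have ha : (a - 1) * (a + 1) = 0 := by nlinarith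
          rcases mul_eq_zero.mp ha with h | h
          · left
            have : a = 1 := by linarith
            rw [hab, this]
            simp
          · right
            have : a = -1 := by linarith
            rw [hab, this]
            simp
        · exfalso; rw [hb] at e1; nlinarith
    · rintro (rfl | rfl)
      · exact ⟨⟨1, by simp⟩, one_pow 2⟩
      · exact ⟨⟨-1, by simp⟩, by rw [neg_sq, one_pow]⟩
end
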